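/- Let G_•/Γ be a nilmanifold of length d. Then the set poly(𝓕∅ → G_•/Γ) of polynomial maps, viewed as a subset of the product space (G/Γ)^{𝓕∅} with the product topology (i.e. the topology of pointwise convergence), is compact. -/

import Mathlib

/-- Auxiliary definition of polynomial maps `𝓕∅ → G` with respect to a prefiltration
`G_•` (given as a sequence of subgroups of an ambient group), with recursion depth `n`:
at depth `0` the prefiltration must be trivial and the map constantly `1`; at depth
`n + 1` the map takes values in `G_0` and all its discrete derivatives
`D_β f (α) = f(α)⁻¹ · f(α ∪ β)` (for `β` non-empty and `α` disjoint from `β`) agree with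
maps that are polynomial of depth `n` with respect to the shifted prefiltration `G_{•+1}`. -/
def PolyAux {G : Type*} [Group G] : ℕ → (ℕ → Subgroup G) → (Finset ℕ → G) → Prop
  | 0, Gs, f => Gs 0 = ⊥ ∧ ∀ α : Finset ℕ, f α = 1
  | n + 1, Gs, f => (∀ α : Finset ℕ, f α ∈ Gs 0) ∧
      ∀ β : Finset ℕ, β.Nonempty →
        ∃ Df : Finset ℕ → G, PolyAux n (fun i => Gs (i + 1)) Df ∧
          ∀ α : Finset ℕ, Disjoint α β → Df α = (f α)⁻¹ * f (α ∪ β)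

/-- `f ∈ poly(𝓕∅ → G_•)`: `f` is polynomial with respect to the (terminating)
prefiltration `G_•`. -/
def IsPolySeq {G : Type*} [Group G] (Gs : ℕ → Subgroup G) (f : Finset ℕ → G) : Prop :=
  ∃ n : ℕ, PolyAux n Gs f

/-- `f ∈ poly(𝓕∅ → G_•/Γ)`: `f = π ∘ g` for some `g ∈ poly(𝓕∅ → G_•)`, where
`π : G → G/Γ` is the quotient map. -/
def IsPolyQuot {G : Type*} [Group G] (Gs : ℕ → Subgroup G) (Γ : Subgroup G)
    (f : Finset ℕ → G ⧸ Γ) : Prop :=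
  ∃ g : Finset ℕ → G, IsPolySeq Gs g ∧ ∀ α : Finset ℕ, f α = QuotientGroup.mk (g α)

namespace PolyProof

open scoped commutatorElement

variable {G : Type*} [Group G]

theorem antitone_shift {Gs : ℕ → Subgroup G} (hA : Antitone Gs) (k : ℕ) :
    Antitone (fun i => Gs (i + k)) := fun a b h => hA (by omega)

theorem polyAux_mem {n : ℕ} {Gs : ℕ → Subgroup G} {f : Finset ℕ → G}
    (h : PolyAux n Gs f) (α : Finset ℕ) : f α ∈ Gs 0 := by
  cases n with
  | zero => rw [h.2 α]; exact one_mem _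
  | succ n => exact h.1 α

theorem polyAux_succ {n : ℕ} : ∀ {Gs : ℕ → Subgroup G} {f : Finset ℕ → G},
    Antitone Gs → PolyAux n Gs f → PolyAux (n + 1) Gs f := by
  induction n with
  | zero =>
    intro Gs f hA h
    refine ⟨fun α => by rw [h.2 α]; exact one_mem _, fun β hβ => ⟨fun _ => 1, ?_, ?_⟩⟩
    · exact ⟨le_bot_iff.1 (h.1 ▸ hA (Nat.zero_le 1)), fun _ => rfl⟩
    · intro α _; rw [h.2 α, h.2 (α ∪ β)]; simp
  | succ n ih =>
    intro Gs f hA h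
    refine ⟨h.1, fun β hβ => ?_⟩
    obtain ⟨Df, h1, h2⟩ := h.2 β hβ
    exact ⟨Df, ih (antitone_shift hA 1) h1, h2⟩

theorem polyAux_of_le {n m : ℕ} {Gs : ℕ → Subgroup G} {f : Finset ℕ → G}
    (hA : Antitone Gs) (hnm : n ≤ m) (h : PolyAux n Gs f) : PolyAux m Gs f := by
  induction m with
  | zero => exact Nat.le_zero.1 hnm ▸ h
  | succ m ih =>
    rcases Nat.lt_or_ge n (m+1) with h' | h'
    · exact polyAux_succ hA (ih (by omega))
    · exact Nat.le_antisymm hnm h' ▸ h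

/-- Depth can be normalized to any `d` with `Gs d = ⊥`. -/
theorem polyAux_bound : ∀ (d : ℕ) {n : ℕ} {Gs : ℕ → Subgroup G} {f : Finset ℕ → G},
    Antitone Gs → Gs d = ⊥ → PolyAux n Gs f → PolyAux d Gs f := by
  intro d
  induction d with
  | zero =>
    intro n Gs f hA hd h
    exact ⟨hd, fun α => by simpa [hd, Subgroup.mem_bot] using polyAux_mem h α⟩
  | succ d ih =>
    intro n Gs f hA hd h
    cases n with
    | zero => exact polyAux_of_le hA (Nat.zero_le _) h
    | succ n =>
      refine ⟨h.1, fun β hβ => ?_⟩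
      obtain ⟨Df, h1, h2⟩ := h.2 β hβ
      exact ⟨Df, ih (antitone_shift hA 1) hd h1, h2⟩

theorem polyAux_one : ∀ (e : ℕ) (Gs : ℕ → Subgroup G), Gs e = ⊥ →
    PolyAux e Gs (fun _ => (1 : G)) := by
  intro e
  induction e with
  | zero => exact fun Gs hd => ⟨hd, fun _ => rfl⟩
  | succ e ih =>
    intro Gs hd
    exact ⟨fun _ => one_mem _, fun β hβ =>
      ⟨fun _ => 1, ih _ hd, fun α _ => by simp⟩⟩

theorem isPolySeq_one {Gs : ℕ → Subgroup G} (e : ℕ) (hd : Gs e = ⊥) :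
    IsPolySeq Gs (fun _ => (1 : G)) := ⟨e, polyAux_one e Gs hd⟩

theorem isPolySeq_const {Gs : ℕ → Subgroup G} (hA : Antitone Gs) (e : ℕ) (hd : Gs e = ⊥)
    {x : G} (hx : x ∈ Gs 0) : IsPolySeq Gs (fun _ => x) := by
  refine ⟨e + 1, ⟨fun _ => hx, fun β hβ => ⟨fun _ => 1, polyAux_one e _ ?_, fun α _ => by simp⟩⟩⟩
  exact le_bot_iff.1 (hd ▸ hA (by omega))

theorem isPolySeq_congr {Gs : ℕ → Subgroup G} {f g : Finset ℕ → G}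
    (h : ∀ α, f α = g α) (hf : IsPolySeq Gs f) : IsPolySeq Gs g := by
  have : f = g := funext h
  exact this ▸ hf

/-- Extract a polynomial witness for the discrete derivative. -/
theorem isPolySeq_deriv {Gs : ℕ → Subgroup G} {f : Finset ℕ → G} (hA : Antitone Gs)
    (hf : IsPolySeq Gs f) {β : Finset ℕ} (hβ : β.Nonempty) :
    ∃ Df : Finset ℕ → G, IsPolySeq (fun i => Gs (i + 1)) Df ∧
      ∀ α : Finset ℕ, Disjoint α β → Df α = (f α)⁻¹ * f (α ∪ β) := by
  obtain ⟨n, hn⟩ := hf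
  cases n with
  | zero =>
    refine ⟨fun _ => 1, isPolySeq_one 0 (le_bot_iff.1 (hn.1 ▸ hA (Nat.zero_le 1))), ?_⟩
    intro α _; rw [hn.2 α, hn.2 (α ∪ β)]; simp
  | succ n =>
    obtain ⟨Df, h1, h2⟩ := hn.2 β hβ
    exact ⟨Df, ⟨n, h1⟩, h2⟩

/-- Build a polynomial map from values and polynomial derivative witnesses. -/
theorem isPolySeq_mk {Gs : ℕ → Subgroup G} {f : Finset ℕ → G} (hA : Antitone Gs)
    (e : ℕ) (hd : Gs e = ⊥) (hval : ∀ α, f α ∈ Gs 0)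
    (hwit : ∀ β : Finset ℕ, β.Nonempty → ∃ Df : Finset ℕ → G,
      IsPolySeq (fun i => Gs (i + 1)) Df ∧
      ∀ α : Finset ℕ, Disjoint α β → Df α = (f α)⁻¹ * f (α ∪ β)) :
    IsPolySeq Gs f := by
  cases e with
  | zero =>
    exact ⟨0, hd, fun α => by simpa [hd, Subgroup.mem_bot] using hval α⟩
  | succ e =>
    refine ⟨e + 1, hval, fun β hβ => ?_⟩
    obtain ⟨Df, ⟨m, hm⟩, h2⟩ := hwit β hβ
    exact ⟨Df, polyAux_bound e (antitone_shift hA 1) hd hm, h2⟩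

/-- Monotonicity in the prefiltration. -/
theorem isPolySeq_of_le : ∀ {n : ℕ} {Gs Gs' : ℕ → Subgroup G} {f : Finset ℕ → G},
    Antitone Gs' → (∀ i, Gs i ≤ Gs' i) → (∀ e, Gs' e = ⊥ → True) → (e : ℕ) → Gs' e = ⊥ →
    PolyAux n Gs f → IsPolySeq Gs' f := by
  intro n
  induction n with
  | zero =>
    intro Gs Gs' f hA hle _ e hd h
    exact isPolySeq_congr (fun α => (h.2 α).symm) (isPolySeq_one e hd)
  | succ n ih =>
    intro Gs Gs' f hA hle _ e hd h
    refine isPolySeq_mk hA e hd (fun α => hle 0 (h.1 α)) (fun β hβ => ?_)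
    obtain ⟨Df, h1, h2⟩ := h.2 β hβ
    refine ⟨Df, ih (antitone_shift hA 1) (fun i => hle (i+1)) (fun _ _ => trivial) e ?_ h1, h2⟩
    exact le_bot_iff.1 (hd ▸ hA (by omega))

theorem isPolySeq_mono {Gs Gs' : ℕ → Subgroup G} {f : Finset ℕ → G}
    (hA : Antitone Gs') (hle : ∀ i, Gs i ≤ Gs' i) (e : ℕ) (hd : Gs' e = ⊥)
    (h : IsPolySeq Gs f) : IsPolySeq Gs' f := by
  obtain ⟨n, hn⟩ := h
  exact isPolySeq_of_le hA hle (fun _ _ => trivial) e hd hn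



/-- Binary encoding of a finite set. -/
def enc (β : Finset ℕ) : ℕ := ∑ i ∈ β, 2 ^ i

theorem enc_mono {β γ : Finset ℕ} (h : β ⊆ γ) : enc β ≤ enc γ :=
  Finset.sum_le_sum_of_subset h

theorem enc_insert {M : ℕ} {β : Finset ℕ} (h : M ∉ β) :
    enc (insert M β) = 2 ^ M + enc β := Finset.sum_insert h

theorem enc_erase {M : ℕ} {β : Finset ℕ} (h : M ∈ β) :
    enc β = 2 ^ M + enc (β.erase M) := by
  conv_lhs => rw [← Finset.insert_erase h]
  rw [enc_insert (Finset.notMem_erase _ _)]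

theorem enc_lt_pow {M : ℕ} : ∀ {β : Finset ℕ}, (∀ i ∈ β, i < M) → enc β < 2 ^ M := by
  induction M with
  | zero =>
    intro β h
    have hβ : β = ∅ := Finset.eq_empty_of_forall_notMem (fun x hx => by have := h x hx; omega)
    simp [hβ, enc]
  | succ M ih =>
    intro β h
    by_cases hM : M ∈ β
    · have h2 := enc_erase hM
      have h3 : enc (β.erase M) < 2 ^ M := by
        refine ih (fun i hi => ?_)
        have := h i (Finset.mem_of_mem_erase hi)
        have := Finset.ne_of_mem_erase hi
        omega
      rw [h2, pow_succ]; omega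
    · have h3 : enc β < 2 ^ M := by
        refine ih (fun i hi => ?_)
        have := h i hi
        rcases Nat.lt_or_ge i M with h' | h'
        · exact h'
        · exfalso; have : i = M := by omega
          exact hM (this ▸ hi)
      have : (2:ℕ) ^ M ≤ 2 ^ (M+1) := Nat.pow_le_pow_right (by norm_num) (by omega)
      omega

theorem pow_le_enc {i : ℕ} {β : Finset ℕ} (h : i ∈ β) : 2 ^ i ≤ enc β :=
  Finset.single_le_sum (fun j _ => Nat.zero_le _) h

theorem enc_eq_zero {β : Finset ℕ} (h : enc β = 0) : β = ∅ := by
  refine Finset.eq_empty_of_forall_notMem (fun i hi => ?_)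
  have h1 := pow_le_enc hi
  have h2 : 0 < 2 ^ i := Nat.pow_pos (by norm_num)
  omega

theorem enc_injective_aux : ∀ n : ℕ, ∀ β γ : Finset ℕ, enc β = n → enc γ = n → β = γ := by
  intro n
  induction n using Nat.strong_induction_on with
  | _ n ih =>
  intro β γ hβn hγn
  have h : enc β = enc γ := hβn.trans hγn.symm
  subst hβn
  rcases Finset.eq_empty_or_nonempty β with hβ | hβ
  · subst hβ
    have h0 : enc γ = 0 := by simpa [enc] using h.symm
    rw [enc_eq_zero h0]
  rcases Finset.eq_empty_or_nonempty γ with hγ | hγ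
  · subst hγ
    have h0 : enc β = 0 := by simpa [enc] using h
    exact absurd (enc_eq_zero h0) (Finset.nonempty_iff_ne_empty.1 hβ)
  set M := β.max' hβ with hM
  set N := γ.max' hγ with hN
  clear_value M N
  have hMβ : M ∈ β := hM ▸ β.max'_mem hβ
  have hNγ : N ∈ γ := hN ▸ γ.max'_mem hγ
  have hbβ : enc β < 2 ^ (M + 1) := by
    have h3 : enc (β.erase M) < 2 ^ M := by
      refine enc_lt_pow (fun i hi => lt_of_le_of_ne ?_ (Finset.ne_of_mem_erase hi))
      exact hM ▸ β.le_max' i (Finset.mem_of_mem_erase hi)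
    have := enc_erase hMβ
    have : enc β < 2 ^ M + 2 ^ M := by omega
    calc enc β < 2 ^ M + 2 ^ M := this
    _ = 2 ^ (M+1) := by ring
  have hbγ : enc γ < 2 ^ (N + 1) := by
    have h3 : enc (γ.erase N) < 2 ^ N := by
      refine enc_lt_pow (fun i hi => lt_of_le_of_ne ?_ (Finset.ne_of_mem_erase hi))
      exact hN ▸ γ.le_max' i (Finset.mem_of_mem_erase hi)
    have := enc_erase hNγ
    have : enc γ < 2 ^ N + 2 ^ N := by omega
    calc enc γ < 2 ^ N + 2 ^ N := this
    _ = 2 ^ (N+1) := by ring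
  have hMN : M = N := by
    have l1 : 2 ^ M ≤ enc β := pow_le_enc hMβ
    have l2 : 2 ^ N ≤ enc γ := pow_le_enc hNγ
    by_contra hne
    rcases Nat.lt_or_ge M N with h' | h'
    · have : (2:ℕ) ^ (M+1) ≤ 2 ^ N := Nat.pow_le_pow_right (by norm_num) (by omega)
      omega
    · have h'' : N < M := by omega
      have : (2:ℕ) ^ (N+1) ≤ 2 ^ M := Nat.pow_le_pow_right (by norm_num) (by omega)
      omega
  subst hMN
  have e1 := enc_erase hMβ
  have e2 := enc_erase hNγ
  have he : enc (β.erase M) = enc (γ.erase M) := by omega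
  have hlt : enc (β.erase M) < enc β := by
    have : 0 < 2 ^ M := Nat.pow_pos (by norm_num)
    omega
  have hee := ih _ hlt _ _ rfl he.symm
  calc β = insert M (β.erase M) := (Finset.insert_erase hMβ).symm
  _ = insert M (γ.erase M) := by rw [hee]
  _ = γ := Finset.insert_erase hNγ

theorem enc_injective : Function.Injective enc := fun β γ h =>
  enc_injective_aux (enc β) β γ rfl h.symm

/-- Ordered product of the coefficients `c β` over all `β ⊆ α` (binary order). -/
def Pprod (c : Finset ℕ → G) (α : Finset ℕ) : G :=
  if h : α = ∅ then c ∅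
  else
    have hne : α.Nonempty := Finset.nonempty_iff_ne_empty.2 h
    have : (α.erase (α.max' hne)).card < α.card :=
      Finset.card_erase_lt_of_mem (α.max'_mem hne)
    Pprod c (α.erase (α.max' hne)) *
      Pprod (fun β => c (insert (α.max' hne) β)) (α.erase (α.max' hne))
termination_by α.card

@[simp] theorem Pprod_empty (c : Finset ℕ → G) : Pprod c ∅ = c ∅ := by
  rw [Pprod]; simp

theorem Pprod_insert (c : Finset ℕ → G) {M : ℕ} {α : Finset ℕ} (h : ∀ i ∈ α, i < M) :
    Pprod c (insert M α) = Pprod c α * Pprod (fun β => c (insert M β)) α := by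
  have hMα : M ∉ α := fun hm => lt_irrefl M (h M hm)
  have hne : (insert M α) ≠ ∅ := Finset.insert_ne_empty _ _
  have hmax : (insert M α).max' (Finset.nonempty_iff_ne_empty.2 hne) = M := by
    refine le_antisymm (Finset.max'_le _ _ _ (fun y hy => ?_)) (Finset.le_max' _ _ (Finset.mem_insert_self _ _))
    rcases Finset.mem_insert.1 hy with rfl | hy
    · exact le_rfl
    · exact le_of_lt (h y hy)
  rw [Pprod]
  simp only [hne, dite_false, hmax, Finset.erase_insert hMα]

/-! ### Structural lemmas for `Pprod` -/

theorem Pprod_congr_aux : ∀ (n : ℕ) (α : Finset ℕ), α.card ≤ n → ∀ c c' : Finset ℕ → G,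
    (∀ β ⊆ α, c β = c' β) → Pprod c α = Pprod c' α := by
  intro n
  induction n with
  | zero =>
    intro α hα c c' h
    have : α = ∅ := Finset.card_eq_zero.1 (Nat.le_zero.1 hα)
    subst this; simpa using h ∅ (by rfl)
  | succ n ih =>
    intro α hα c c' h
    rcases Finset.eq_empty_or_nonempty α with rfl | hne
    · simpa using h ∅ (by rfl)
    obtain ⟨M, α', rfl, hlt, hM, hcard⟩ :
        ∃ M α', α = insert M α' ∧ (∀ i ∈ α', i < M) ∧ M ∉ α' ∧ α'.card + 1 = α.card := by
      refine ⟨α.max' hne, α.erase (α.max' hne), (Finset.insert_erase (α.max'_mem hne)).symm,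
        fun i hi => lt_of_le_of_ne (α.le_max' i (Finset.mem_of_mem_erase hi))
          (Finset.ne_of_mem_erase hi), Finset.notMem_erase _ _, ?_⟩
      exact Finset.card_erase_add_one (α.max'_mem hne)
    rw [Pprod_insert c hlt, Pprod_insert c' hlt]
    have h1 : Pprod c α' = Pprod c' α' :=
      ih α' (by omega) c c' (fun β hβ => h β (hβ.trans (Finset.subset_insert _ _)))
    have h2 : Pprod (fun β => c (insert M β)) α' = Pprod (fun β => c' (insert M β)) α' :=
      ih α' (by omega) _ _ (fun β hβ => h _ (Finset.insert_subset_insert _ hβ))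
    rw [h1, h2]

theorem Pprod_congr {α : Finset ℕ} {c c' : Finset ℕ → G}
    (h : ∀ β ⊆ α, c β = c' β) : Pprod c α = Pprod c' α :=
  Pprod_congr_aux α.card α le_rfl c c' h

theorem Pprod_mem_aux : ∀ (n : ℕ) (α : Finset ℕ), α.card ≤ n → ∀ (c : Finset ℕ → G)
    (H : Subgroup G), (∀ β ⊆ α, c β ∈ H) → Pprod c α ∈ H := by
  intro n
  induction n with
  | zero =>
    intro α hα c H h
    have : α = ∅ := Finset.card_eq_zero.1 (Nat.le_zero.1 hα)
    subst this; simpa using h ∅ (by rfl)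
  | succ n ih =>
    intro α hα c H h
    rcases Finset.eq_empty_or_nonempty α with rfl | hne
    · simpa using h ∅ (by rfl)
    obtain ⟨M, α', rfl, hlt, hM, hcard⟩ :
        ∃ M α', α = insert M α' ∧ (∀ i ∈ α', i < M) ∧ M ∉ α' ∧ α'.card + 1 = α.card := by
      refine ⟨α.max' hne, α.erase (α.max' hne), (Finset.insert_erase (α.max'_mem hne)).symm,
        fun i hi => lt_of_le_of_ne (α.le_max' i (Finset.mem_of_mem_erase hi))
          (Finset.ne_of_mem_erase hi), Finset.notMem_erase _ _, ?_⟩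
      exact Finset.card_erase_add_one (α.max'_mem hne)
    rw [Pprod_insert c hlt]
    refine mul_mem (ih α' (by omega) c H (fun β hβ => h β (hβ.trans (Finset.subset_insert _ _))))
      (ih α' (by omega) _ H (fun β hβ => h _ (Finset.insert_subset_insert _ hβ)))

theorem Pprod_mem {α : Finset ℕ} {c : Finset ℕ → G} {H : Subgroup G}
    (h : ∀ β ⊆ α, c β ∈ H) : Pprod c α ∈ H :=
  Pprod_mem_aux α.card α le_rfl c H h

theorem Pprod_eq_one {α : Finset ℕ} {c : Finset ℕ → G}
    (h : ∀ β ⊆ α, c β = 1) : Pprod c α = 1 := by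
  have : Pprod c α ∈ (⊥ : Subgroup G) :=
    Pprod_mem (fun β hβ => by rw [h β hβ]; exact one_mem _)
  simpa [Subgroup.mem_bot] using this

theorem insert_eq_insert_iff {M : ℕ} {β γ : Finset ℕ} (hβ : M ∉ β) (hγ : M ∉ γ) :
    insert M β = insert M γ ↔ β = γ := by
  constructor
  · intro h
    have := congrArg (fun s => Finset.erase s M) h
    simpa [Finset.erase_insert hβ, Finset.erase_insert hγ] using this
  · rintro rfl; rfl

/-- The factor indexed by `α` itself comes last in `Pprod c α`. -/
theorem Pprod_last_aux : ∀ (n : ℕ) (α : Finset ℕ), α.card ≤ n → ∀ c : Finset ℕ → G,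
    Pprod c α = Pprod (fun β => if β = α then 1 else c β) α * c α := by
  intro n
  induction n with
  | zero =>
    intro α hα c
    have : α = ∅ := Finset.card_eq_zero.1 (Nat.le_zero.1 hα)
    subst this; simp
  | succ n ih =>
    intro α hα c
    rcases Finset.eq_empty_or_nonempty α with rfl | hne
    · simp
    obtain ⟨M, α', rfl, hlt, hM, hcard⟩ :
        ∃ M α', α = insert M α' ∧ (∀ i ∈ α', i < M) ∧ M ∉ α' ∧ α'.card + 1 = α.card := by
      refine ⟨α.max' hne, α.erase (α.max' hne), (Finset.insert_erase (α.max'_mem hne)).symm,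
        fun i hi => lt_of_le_of_ne (α.le_max' i (Finset.mem_of_mem_erase hi))
          (Finset.ne_of_mem_erase hi), Finset.notMem_erase _ _, ?_⟩
      exact Finset.card_erase_add_one (α.max'_mem hne)
    rw [Pprod_insert c hlt, Pprod_insert _ hlt]
    have e1 : Pprod (fun β => if β = insert M α' then 1 else c β) α' = Pprod c α' := by
      refine Pprod_congr (fun β hβ => ?_)
      have : β ≠ insert M α' := by
        intro h; rw [h] at hβ
        exact hM (hβ (Finset.mem_insert_self _ _))
      simp [this]
    have e2 : Pprod (fun β => if insert M β = insert M α' then 1 else c (insert M β)) α' =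
        Pprod (fun β => if β = α' then 1 else c (insert M β)) α' := by
      refine Pprod_congr (fun β hβ => ?_)
      have hMβ : M ∉ β := fun hmem => lt_irrefl M (hlt M (hβ hmem))
      by_cases h : β = α'
      · simp [h, insert_eq_insert_iff hMβ hM]
      · have : insert M β ≠ insert M α' := by
          rw [Ne, insert_eq_insert_iff hMβ hM]; exact h
        simp [h, this]
    have e3 := ih α' (by omega) (fun β => c (insert M β))
    rw [e1, e2, e3, mul_assoc]

theorem Pprod_last {α : Finset ℕ} (c : Finset ℕ → G) :
    Pprod c α = Pprod (fun β => if β = α then 1 else c β) α * c α :=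
  Pprod_last_aux α.card α le_rfl c

/-- Peel off the factor with the largest binary code from a coefficient product. -/
theorem Pprod_peel_aux : ∀ (n : ℕ) (α : Finset ℕ), α.card ≤ n → ∀ (c : Finset ℕ → G)
    (βs : Finset ℕ), (∀ β ⊆ α, c β ≠ 1 → enc β ≤ enc βs) →
    Pprod c α = Pprod (fun β => if β = βs then 1 else c β) α *
      (if βs ⊆ α then c βs else 1) := by
  intro n
  induction n with
  | zero =>
    intro α hα c βs h
    have : α = ∅ := Finset.card_eq_zero.1 (Nat.le_zero.1 hα)
    subst this
    by_cases hs : βs ⊆ (∅ : Finset ℕ)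
    · have : βs = ∅ := Finset.subset_empty.1 hs
      subst this; simp
    · have : βs ≠ ∅ := fun h' => hs (by simp [h'])
      simp [hs, Ne.symm this]
  | succ n ih =>
    intro α hα c βs h
    by_cases hsub : βs ⊆ α
    swap
    · rw [if_neg hsub, mul_one]
      refine Pprod_congr (fun β hβ => ?_)
      have : β ≠ βs := fun h' => hsub (h' ▸ hβ)
      simp [this]
    rcases Finset.eq_empty_or_nonempty α with rfl | hne
    · have : βs = ∅ := Finset.subset_empty.1 hsub
      subst this; simp
    obtain ⟨M, α', rfl, hlt, hM, hcard⟩ :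
        ∃ M α', α = insert M α' ∧ (∀ i ∈ α', i < M) ∧ M ∉ α' ∧ α'.card + 1 = α.card := by
      refine ⟨α.max' hne, α.erase (α.max' hne), (Finset.insert_erase (α.max'_mem hne)).symm,
        fun i hi => lt_of_le_of_ne (α.le_max' i (Finset.mem_of_mem_erase hi))
          (Finset.ne_of_mem_erase hi), Finset.notMem_erase _ _, ?_⟩
      exact Finset.card_erase_add_one (α.max'_mem hne)
    rw [if_pos hsub, Pprod_insert c hlt, Pprod_insert _ hlt]
    by_cases hMs : M ∈ βs
    · -- the peeled set contains M
      have e1 : Pprod c α' = Pprod (fun β => if β = βs then 1 else c β) α' := by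
        refine Pprod_congr (fun β hβ => ?_)
        have : β ≠ βs := fun h' => hM (hβ (h' ▸ hMs) : M ∈ α')
        simp [this]
      set βs' := βs.erase M with hβs'
      have hMβs' : M ∉ βs' := Finset.notMem_erase _ _
      have hins : insert M βs' = βs := Finset.insert_erase hMs
      have hsub' : βs' ⊆ α' := by
        intro i hi
        have h1 : i ∈ βs := Finset.mem_of_mem_erase hi
        have h2 : i ≠ M := Finset.ne_of_mem_erase hi
        rcases Finset.mem_insert.1 (hsub h1) with h3 | h3
        · exact absurd h3 h2
        · exact h3
      have e2 := ih α' (by omega) (fun β => c (insert M β)) βs' ?_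
      swap
      · intro β hβ hne1
        have hMβ : M ∉ β := fun hmem => lt_irrefl M (hlt M (hβ hmem))
        have h1 : enc (insert M β) ≤ enc βs :=
          h (insert M β) (Finset.insert_subset_insert _ hβ) hne1
        rw [← hins, enc_insert hMβ, enc_insert hMβs'] at *
        omega
      rw [if_pos hsub'] at e2
      have e3 : Pprod (fun β => if β = βs' then 1 else c (insert M β)) α' =
          Pprod (fun β => if insert M β = βs then 1 else c (insert M β)) α' := by
        refine Pprod_congr (fun β hβ => ?_)
        have hMβ : M ∉ β := fun hmem => lt_irrefl M (hlt M (hβ hmem))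
        have : insert M β = βs ↔ β = βs' := by
          rw [← hins, insert_eq_insert_iff hMβ hMβs']
        by_cases h' : β = βs'
        · simp [h', hins]
        · simp [h', (by rw [this]; exact h' : ¬ insert M β = βs)]
      have e4 : c (insert M βs') = c βs := by rw [hins]
      rw [e2, e3, e4] at *
      rw [e1, mul_assoc]
    · -- M not in the peeled set
      have hsub' : βs ⊆ α' := by
        intro i hi
        rcases Finset.mem_insert.1 (hsub hi) with h3 | h3
        · exact absurd (h3 ▸ hi) hMs
        · exact h3
      have hbound : enc βs < 2 ^ M := enc_lt_pow (fun i hi => hlt i (hsub' hi))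
      have z1 : Pprod (fun β => c (insert M β)) α' = 1 := by
        refine Pprod_eq_one (fun β hβ => ?_)
        by_contra hne1
        have hMβ : M ∉ β := fun hmem => lt_irrefl M (hlt M (hβ hmem))
        have h1 : enc (insert M β) ≤ enc βs :=
          h (insert M β) (Finset.insert_subset_insert _ hβ) hne1
        rw [enc_insert hMβ] at h1
        omega
      have z2 : Pprod (fun β => if insert M β = βs then 1 else c (insert M β)) α' = 1 := by
        refine Pprod_eq_one (fun β hβ => ?_)
        by_cases h' : insert M β = βs
        · simp [h']
        · simp only [h', if_false]
          by_contra hne1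
          have hMβ : M ∉ β := fun hmem => lt_irrefl M (hlt M (hβ hmem))
          have h1 : enc (insert M β) ≤ enc βs :=
            h (insert M β) (Finset.insert_subset_insert _ hβ) hne1
          rw [enc_insert hMβ] at h1
          omega
      have e2 := ih α' (by omega) c βs
        (fun β hβ => h β (hβ.trans (Finset.subset_insert _ _)))
      rw [if_pos hsub'] at e2
      rw [z1, z2, mul_one, mul_one, e2]

theorem Pprod_peel {α : Finset ℕ} {c : Finset ℕ → G} {βs : Finset ℕ}
    (h : ∀ β ⊆ α, c β ≠ 1 → enc β ≤ enc βs) :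
    Pprod c α = Pprod (fun β => if β = βs then 1 else c β) α *
      (if βs ⊆ α then c βs else 1) :=
  Pprod_peel_aux α.card α le_rfl c βs h

/-! ### Taylor coefficients -/

def taylorAux (Dm : Finset ℕ → G) : ℕ → Finset ℕ → G
  | 0, _ => 1
  | n+1, β => if β.card = n then
      (Pprod (fun β' => if β' = β then 1 else taylorAux Dm n β') β)⁻¹ * Dm β
    else taylorAux Dm n β

def taylor (Dm : Finset ℕ → G) (β : Finset ℕ) : G := taylorAux Dm (β.card + 1) β

theorem taylorAux_stable (Dm : Finset ℕ → G) :
    ∀ n β, β.card < n → taylorAux Dm n β = taylor Dm β := by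
  intro n
  induction n with
  | zero => intro β h; omega
  | succ n ih =>
    intro β h
    by_cases hc : β.card = n
    · subst hc; rfl
    · have : taylorAux Dm (n+1) β = taylorAux Dm n β := by
        simp [taylorAux, hc]
      rw [this, ih β (by omega)]

theorem taylor_eq (Dm : Finset ℕ → G) (β : Finset ℕ) :
    taylor Dm β = (Pprod (fun β' => if β' = β then 1 else taylor Dm β') β)⁻¹ * Dm β := by
  have h0 : taylor Dm β =
      (Pprod (fun β' => if β' = β then 1 else taylorAux Dm β.card β') β)⁻¹ * Dm β := by
    show taylorAux Dm (β.card + 1) β = _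
    simp [taylorAux]
  rw [h0]
  congr 1
  congr 1
  refine Pprod_congr (fun β' hβ' => ?_)
  by_cases h' : β' = β
  · simp [h']
  · have hlt : β'.card < β.card :=
      Finset.card_lt_card (lt_of_le_of_ne hβ' h')
    simp only [h', if_false]
    exact taylorAux_stable Dm β.card β' hlt

/-- Any map is the coefficient product of its Taylor coefficients. -/
theorem Pprod_taylor (Dm : Finset ℕ → G) (α : Finset ℕ) :
    Pprod (taylor Dm) α = Dm α := by
  rw [Pprod_last (taylor Dm)]
  conv_lhs => rw [taylor_eq Dm α]
  exact mul_inv_cancel_left _ _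

/-- Taylor coefficients are local. -/
theorem taylor_congr_aux : ∀ (n : ℕ) (β : Finset ℕ), β.card ≤ n →
    ∀ Dm Dm' : Finset ℕ → G, (∀ γ ⊆ β, Dm γ = Dm' γ) →
    taylor Dm β = taylor Dm' β := by
  intro n
  induction n with
  | zero =>
    intro β hβ Dm Dm' h
    have : β = ∅ := Finset.card_eq_zero.1 (Nat.le_zero.1 hβ)
    subst this
    rw [taylor_eq, taylor_eq]
    have : Pprod (fun β' => if β' = (∅:Finset ℕ) then 1 else taylor Dm β') ∅ =
        Pprod (fun β' => if β' = (∅:Finset ℕ) then 1 else taylor Dm' β') ∅ := by simp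
    rw [this, h ∅ (by rfl)]
  | succ n ih =>
    intro β hβ Dm Dm' h
    rw [taylor_eq, taylor_eq, h β (by rfl)]
    congr 2
    refine Pprod_congr (fun β' hβ' => ?_)
    by_cases h' : β' = β
    · simp [h']
    · simp only [h', if_false]
      have hlt : β'.card < β.card := Finset.card_lt_card (lt_of_le_of_ne hβ' h')
      exact ih β' (by omega) Dm Dm' (fun γ hγ => h γ (hγ.trans hβ'))

theorem taylor_congr {β : Finset ℕ} {Dm Dm' : Finset ℕ → G}
    (h : ∀ γ ⊆ β, Dm γ = Dm' γ) : taylor Dm β = taylor Dm' β :=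
  taylor_congr_aux β.card β le_rfl Dm Dm' h

/-! ### The group law for polynomial maps -/

def shiftF (Gs : ℕ → Subgroup G) (k : ℕ) : ℕ → Subgroup G := fun i => Gs (i + k)

theorem isPolySeq_cast {Fs Fs' : ℕ → Subgroup G}
    (h : ∀ i, Fs i = Fs' i) {f : Finset ℕ → G} (hf : IsPolySeq Fs f) : IsPolySeq Fs' f := by
  have : Fs = Fs' := funext h
  exact this ▸ hf

theorem isPolySeq_mem {Fs : ℕ → Subgroup G} {f : Finset ℕ → G}
    (hf : IsPolySeq Fs f) (α : Finset ℕ) : f α ∈ Fs 0 := by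
  obtain ⟨n, hn⟩ := hf; exact polyAux_mem hn α

theorem conj_mem_left {Gs : ℕ → Subgroup G} (hA : Antitone Gs)
    (hC : ∀ i j, ⁅Gs i, Gs j⁆ ≤ Gs (i + j)) {k : ℕ} {x y : G}
    (hx : x ∈ Gs k) (hy : y ∈ Gs 0) : y * x * y⁻¹ ∈ Gs k := by
  have h1 : y * x * y⁻¹ = ⁅y, x⁆ * x := by group
  have h2 : ⁅y, x⁆ ∈ Gs (0 + k) :=
    hC 0 k (Subgroup.commutator_mem_commutator hy hx)
  rw [h1]
  exact mul_mem (by simpa using h2) hx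

theorem conj_mem_right {Gs : ℕ → Subgroup G} (hA : Antitone Gs)
    (hC : ∀ i j, ⁅Gs i, Gs j⁆ ≤ Gs (i + j)) {k : ℕ} {x y : G}
    (hx : x ∈ Gs k) (hy : y ∈ Gs 0) : y⁻¹ * x * y ∈ Gs k := by
  have := conj_mem_left hA hC hx (inv_mem hy)
  simpa using this

theorem hC_shift {Gs : ℕ → Subgroup G} (hA : Antitone Gs)
    (hC : ∀ i j, ⁅Gs i, Gs j⁆ ≤ Gs (i + j)) (k : ℕ) :
    ∀ i j, ⁅shiftF Gs k i, shiftF Gs k j⁆ ≤ shiftF Gs k (i + j) := by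
  intro i j
  refine le_trans (hC (i + k) (j + k)) (hA (by omega))

theorem grand (d : ℕ) : ∀ Gs : ℕ → Subgroup G, Antitone Gs →
    (∀ i j, ⁅Gs i, Gs j⁆ ≤ Gs (i + j)) → Gs d = ⊥ →
    (∀ f g : Finset ℕ → G, IsPolySeq Gs f → IsPolySeq Gs g →
        IsPolySeq Gs (fun α => f α * g α)) ∧
    (∀ f : Finset ℕ → G, IsPolySeq Gs f → IsPolySeq Gs (fun α => (f α)⁻¹)) ∧
    (∀ s, 1 ≤ s → ∀ g u : Finset ℕ → G, IsPolySeq Gs g → IsPolySeq (shiftF Gs s) u →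
        IsPolySeq (shiftF Gs s) (fun α => g α * u α * (g α)⁻¹)) ∧
    (∀ s, 1 ≤ s → ∀ g u : Finset ℕ → G, IsPolySeq Gs g → IsPolySeq (shiftF Gs s) u →
        IsPolySeq (shiftF Gs s) (fun α => (g α)⁻¹ * u α * g α)) ∧
    (∀ i j, 1 ≤ i → 1 ≤ j → ∀ u v : Finset ℕ → G,
        IsPolySeq (shiftF Gs i) u → IsPolySeq (shiftF Gs j) v →
        IsPolySeq (shiftF Gs (i + j)) (fun α => ⁅u α, v α⁆)) := by
  induction d using Nat.strong_induction_on with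
  | _ d IH =>
  intro Gs hA hC hd
  have hbot : ∀ e, d ≤ e → Gs e = ⊥ := fun e he => le_bot_iff.1 (hd ▸ hA he)
  rcases Nat.eq_zero_or_pos d with rfl | hdpos
  · -- trivial case : `Gs 0 = ⊥`
    have triv : ∀ k f, IsPolySeq (shiftF Gs k) f → ∀ α, f α = 1 := by
      intro k f hf α
      have h1 := isPolySeq_mem hf α
      have h2 : shiftF Gs k 0 = ⊥ := hbot _ (by omega)
      rw [h2] at h1
      simpa [Subgroup.mem_bot] using h1
    have triv0 : ∀ f, IsPolySeq Gs f → ∀ α, f α = 1 := by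
      intro f hf
      exact triv 0 f (isPolySeq_cast (fun i => congrArg Gs (by omega)) hf)
    have hone : ∀ k : ℕ, IsPolySeq (shiftF Gs k) (fun _ => (1:G)) :=
      fun k => isPolySeq_one 0 (hbot _ (by omega))
    have hone0 : IsPolySeq Gs (fun _ => (1:G)) := isPolySeq_one 0 (hbot _ le_rfl)
    refine ⟨?_, ?_, ?_, ?_, ?_⟩
    · intro f g hf hg
      exact isPolySeq_congr (fun α => by rw [triv0 f hf α, triv0 g hg α, one_mul]) hone0
    · intro f hf
      exact isPolySeq_congr (fun α => by rw [triv0 f hf α, inv_one]) hone0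
    · intro s hs g u hg hu
      exact isPolySeq_congr (fun α => by rw [triv s u hu α]; group) (hone s)
    · intro s hs g u hg hu
      exact isPolySeq_congr (fun α => by rw [triv s u hu α]; group) (hone s)
    · intro i j hi hj u v hu hv
      refine isPolySeq_congr (fun α => ?_) (hone (i+j))
      rw [triv i u hu α]
      simp [commutatorElement_def]
  -- main case : `d ≥ 1`
  have IHk : ∀ k, 1 ≤ k →
      (∀ f g : Finset ℕ → G, IsPolySeq (shiftF Gs k) f → IsPolySeq (shiftF Gs k) g →
          IsPolySeq (shiftF Gs k) (fun α => f α * g α)) ∧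
      (∀ f : Finset ℕ → G, IsPolySeq (shiftF Gs k) f →
          IsPolySeq (shiftF Gs k) (fun α => (f α)⁻¹)) ∧
      (∀ s, 1 ≤ s → ∀ g u : Finset ℕ → G, IsPolySeq (shiftF Gs k) g →
          IsPolySeq (shiftF (shiftF Gs k) s) u →
          IsPolySeq (shiftF (shiftF Gs k) s) (fun α => g α * u α * (g α)⁻¹)) ∧
      (∀ s, 1 ≤ s → ∀ g u : Finset ℕ → G, IsPolySeq (shiftF Gs k) g →
          IsPolySeq (shiftF (shiftF Gs k) s) u →
          IsPolySeq (shiftF (shiftF Gs k) s) (fun α => (g α)⁻¹ * u α * g α)) ∧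
      (∀ i j, 1 ≤ i → 1 ≤ j → ∀ u v : Finset ℕ → G,
          IsPolySeq (shiftF (shiftF Gs k) i) u → IsPolySeq (shiftF (shiftF Gs k) j) v →
          IsPolySeq (shiftF (shiftF Gs k) (i + j)) (fun α => ⁅u α, v α⁆)) := by
    intro k hk
    exact IH (d - k) (by omega) (shiftF Gs k) (antitone_shift hA k) (hC_shift hA hC k)
      (hbot _ (by omega))
  have hAs : ∀ k, Antitone (shiftF Gs k) := fun k => antitone_shift hA k
  have hbots : ∀ k, shiftF Gs k d = ⊥ := fun k => hbot _ (by omega)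
  -- downward induction : left conjugation and commutators
  have CHAIN : ∀ t : ℕ, ∀ s, 1 ≤ s → d ≤ s + t →
      ((∀ g u : Finset ℕ → G, IsPolySeq Gs g → IsPolySeq (shiftF Gs s) u →
          IsPolySeq (shiftF Gs s) (fun α => g α * u α * (g α)⁻¹)) ∧
       (∀ i j, 1 ≤ i → 1 ≤ j → i + j = s → ∀ u v : Finset ℕ → G,
          IsPolySeq (shiftF Gs i) u → IsPolySeq (shiftF Gs j) v →
          IsPolySeq (shiftF Gs s) (fun α => ⁅u α, v α⁆))) := by
    intro t
    induction t with
    | zero =>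
      intro s hs hds
      have hsbot : shiftF Gs s 0 = ⊥ := hbot (0 + s) (by omega)
      constructor
      · intro g u hg hu
        have hu1 : ∀ α, u α = 1 := fun α => by
          have := isPolySeq_mem hu α; rw [hsbot] at this
          simpa [Subgroup.mem_bot] using this
        refine isPolySeq_congr (fun α => ?_) (isPolySeq_one 0 hsbot)
        rw [hu1 α]; group
      · intro i j hi hj hij u v hu hv
        refine isPolySeq_congr (fun α => ?_) (isPolySeq_one 0 hsbot)
        have h1 : u α ∈ Gs i := by simpa [shiftF] using isPolySeq_mem hu α
        have h2 : v α ∈ Gs j := by simpa [shiftF] using isPolySeq_mem hv α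
        have h3 : ⁅u α, v α⁆ ∈ Gs (i + j) := hC i j (Subgroup.commutator_mem_commutator h1 h2)
        have h4 : Gs (i + j) = ⊥ := hbot _ (by omega)
        rw [h4] at h3
        exact (Subgroup.mem_bot.1 h3).symm
    | succ t iht =>
      intro s hs hds
      have Hnext : ∀ T, s + 1 ≤ T →
          ((∀ g u : Finset ℕ → G, IsPolySeq Gs g → IsPolySeq (shiftF Gs T) u →
              IsPolySeq (shiftF Gs T) (fun α => g α * u α * (g α)⁻¹)) ∧
           (∀ i j, 1 ≤ i → 1 ≤ j → i + j = T → ∀ u v : Finset ℕ → G,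
              IsPolySeq (shiftF Gs i) u → IsPolySeq (shiftF Gs j) v →
              IsPolySeq (shiftF Gs T) (fun α => ⁅u α, v α⁆))) :=
        fun T hT => iht T (by omega) (by omega)
      constructor
      · -- left conjugation at level s
        intro g u hg hu
        refine isPolySeq_mk (hAs s) d (hbots s) (fun α => ?_) (fun β hβ => ?_)
        · have hx : u α ∈ Gs (0 + s) := isPolySeq_mem hu α
          have hy : g α ∈ Gs 0 := isPolySeq_mem hg α
          exact conj_mem_left hA hC hx hy
        · obtain ⟨Dg, hDg, hDgp⟩ := isPolySeq_deriv hA hg hβ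
          obtain ⟨Du, hDu, hDup⟩ := isPolySeq_deriv (hAs s) hu hβ
          have hDg1 : IsPolySeq (shiftF Gs 1) Dg :=
            isPolySeq_cast (fun i => congrArg Gs (by omega)) hDg
          have hDu1 : IsPolySeq (shiftF Gs (s+1)) Du :=
            isPolySeq_cast (fun i => congrArg Gs (by omega)) hDu
          -- the witness
          set W : Finset ℕ → G := fun α =>
            g α * (((u α)⁻¹ * ⁅Dg α, u α⁆ * u α) * (Dg α * Du α * (Dg α)⁻¹)) * (g α)⁻¹
            with hW
          have m1 : IsPolySeq (shiftF Gs (s+1)) (fun α => ⁅Dg α, u α⁆) := by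
            have := (Hnext (s+1) le_rfl).2 1 s le_rfl hs (by omega) Dg u hDg1 hu
            exact isPolySeq_cast (fun i => congrArg Gs (by omega)) this
          have m2 : IsPolySeq (shiftF Gs (s+1))
              (fun α => (u α)⁻¹ * ⁅Dg α, u α⁆ * u α) := by
            have h' : IsPolySeq (shiftF (shiftF Gs s) 1) (fun α => ⁅Dg α, u α⁆) :=
              isPolySeq_cast (fun i => congrArg Gs (by omega)) m1
            have := (IHk s hs).2.2.2.1 1 le_rfl u (fun α => ⁅Dg α, u α⁆) hu h'
            exact isPolySeq_cast (fun i => congrArg Gs (by omega)) this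
          have m3 : IsPolySeq (shiftF Gs (s+1))
              (fun α => Dg α * Du α * (Dg α)⁻¹) := by
            have h' : IsPolySeq (shiftF (shiftF Gs 1) s) Du :=
              isPolySeq_cast (fun i => congrArg Gs (by omega)) hDu1
            have := (IHk 1 le_rfl).2.2.1 s hs Dg Du hDg1 h'
            exact isPolySeq_cast (fun i => congrArg Gs (by omega)) this
          have m4 : IsPolySeq (shiftF Gs (s+1))
              (fun α => ((u α)⁻¹ * ⁅Dg α, u α⁆ * u α) * (Dg α * Du α * (Dg α)⁻¹)) :=
            (IHk (s+1) (by omega)).1 _ _ m2 m3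
          have m5 : IsPolySeq (shiftF Gs (s+1)) W :=
            (Hnext (s+1) le_rfl).1 g _ hg m4
          refine ⟨W, isPolySeq_cast (fun i => congrArg Gs (by omega)) m5, fun α hα => ?_⟩
          rw [hW]
          have e1 : g (α ∪ β) = g α * Dg α := by
            rw [hDgp α hα]; group
          have e2 : u (α ∪ β) = u α * Du α := by
            rw [hDup α hα]; group
          simp only [e1, e2, commutatorElement_def]
          group
      · -- commutators at level s
        intro i j hi hj hij u v hu hv
        subst hij
        refine isPolySeq_mk (hAs (i+j)) d (hbots (i+j)) (fun α => ?_) (fun β hβ => ?_)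
        · have h1 : u α ∈ Gs i := by simpa [shiftF] using isPolySeq_mem hu α
          have h2 : v α ∈ Gs j := by simpa [shiftF] using isPolySeq_mem hv α
          have h3 : ⁅u α, v α⁆ ∈ Gs (i + j) := hC i j (Subgroup.commutator_mem_commutator h1 h2)
          simpa [shiftF] using h3
        · obtain ⟨Du, hDu, hDup⟩ := isPolySeq_deriv (hAs i) hu hβ
          obtain ⟨Dv, hDv, hDvp⟩ := isPolySeq_deriv (hAs j) hv hβ
          have hDu1 : IsPolySeq (shiftF Gs (i+1)) Du :=
            isPolySeq_cast (fun t => congrArg Gs (by omega)) hDu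
          have hDv1 : IsPolySeq (shiftF Gs (j+1)) Dv :=
            isPolySeq_cast (fun t => congrArg Gs (by omega)) hDv
          set s := i + j with hs'
          set t₁ : Finset ℕ → G := fun α =>
            v α * (u α * ((v α)⁻¹ * ⁅Du α, v α⁆ * v α) * (u α)⁻¹) * (v α)⁻¹ with ht₁
          set t₂ : Finset ℕ → G := fun α =>
            v α * (⁅u α, Dv α⁆ *
              (Dv α * (u α * ((Dv α)⁻¹ * ⁅Du α, Dv α⁆ * Dv α) * (u α)⁻¹) * (Dv α)⁻¹)) *
              (v α)⁻¹ with ht₂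
          -- membership of t₁
          have n1 : IsPolySeq (shiftF Gs (s+1)) (fun α => ⁅Du α, v α⁆) := by
            have := (Hnext (s+1) le_rfl).2 (i+1) j (by omega) hj (by omega) Du v hDu1 hv
            exact this
          have n2 : IsPolySeq (shiftF Gs (s+1))
              (fun α => (v α)⁻¹ * ⁅Du α, v α⁆ * v α) := by
            have h' : IsPolySeq (shiftF (shiftF Gs j) (i+1)) (fun α => ⁅Du α, v α⁆) :=
              isPolySeq_cast (fun t => congrArg Gs (by omega)) n1
            have := (IHk j hj).2.2.2.1 (i+1) (by omega) v _ hv h'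
            exact isPolySeq_cast (fun t => congrArg Gs (by omega)) this
          have n3 : IsPolySeq (shiftF Gs (s+1))
              (fun α => u α * ((v α)⁻¹ * ⁅Du α, v α⁆ * v α) * (u α)⁻¹) := by
            have h' : IsPolySeq (shiftF (shiftF Gs i) (j+1))
                (fun α => (v α)⁻¹ * ⁅Du α, v α⁆ * v α) :=
              isPolySeq_cast (fun t => congrArg Gs (by omega)) n2
            have := (IHk i hi).2.2.1 (j+1) (by omega) u _ hu h'
            exact isPolySeq_cast (fun t => congrArg Gs (by omega)) this
          have n4 : IsPolySeq (shiftF Gs (s+1)) t₁ := by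
            have h' : IsPolySeq (shiftF (shiftF Gs j) (i+1))
                (fun α => u α * ((v α)⁻¹ * ⁅Du α, v α⁆ * v α) * (u α)⁻¹) :=
              isPolySeq_cast (fun t => congrArg Gs (by omega)) n3
            have := (IHk j hj).2.2.1 (i+1) (by omega) v _ hv h'
            exact isPolySeq_cast (fun t => congrArg Gs (by omega)) this
          -- membership of t₂
          have p1 : IsPolySeq (shiftF Gs (s+2)) (fun α => ⁅Du α, Dv α⁆) := by
            have := (Hnext (s+2) (by omega)).2 (i+1) (j+1) (by omega) (by omega) (by omega)
              Du Dv hDu1 hDv1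
            exact this
          have p2 : IsPolySeq (shiftF Gs (s+2))
              (fun α => (Dv α)⁻¹ * ⁅Du α, Dv α⁆ * Dv α) := by
            have h' : IsPolySeq (shiftF (shiftF Gs (j+1)) (i+1)) (fun α => ⁅Du α, Dv α⁆) :=
              isPolySeq_cast (fun t => congrArg Gs (by omega)) p1
            have := (IHk (j+1) (by omega)).2.2.2.1 (i+1) (by omega) Dv _ hDv1 h'
            exact isPolySeq_cast (fun t => congrArg Gs (by omega)) this
          have p3 : IsPolySeq (shiftF Gs (s+2))
              (fun α => u α * ((Dv α)⁻¹ * ⁅Du α, Dv α⁆ * Dv α) * (u α)⁻¹) := by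
            have h' : IsPolySeq (shiftF (shiftF Gs i) (j+2))
                (fun α => (Dv α)⁻¹ * ⁅Du α, Dv α⁆ * Dv α) :=
              isPolySeq_cast (fun t => congrArg Gs (by omega)) p2
            have := (IHk i hi).2.2.1 (j+2) (by omega) u _ hu h'
            exact isPolySeq_cast (fun t => congrArg Gs (by omega)) this
          have p4 : IsPolySeq (shiftF Gs (s+2))
              (fun α => Dv α * (u α * ((Dv α)⁻¹ * ⁅Du α, Dv α⁆ * Dv α) * (u α)⁻¹) * (Dv α)⁻¹)
              := by
            have h' : IsPolySeq (shiftF (shiftF Gs (j+1)) (i+1))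
                (fun α => u α * ((Dv α)⁻¹ * ⁅Du α, Dv α⁆ * Dv α) * (u α)⁻¹) :=
              isPolySeq_cast (fun t => congrArg Gs (by omega)) p3
            have := (IHk (j+1) (by omega)).2.2.1 (i+1) (by omega) Dv _ hDv1 h'
            exact isPolySeq_cast (fun t => congrArg Gs (by omega)) this
          have p4' : IsPolySeq (shiftF Gs (s+1))
              (fun α => Dv α * (u α * ((Dv α)⁻¹ * ⁅Du α, Dv α⁆ * Dv α) * (u α)⁻¹) * (Dv α)⁻¹)
              := isPolySeq_mono (hAs (s+1)) (fun t => hA (by omega)) d (hbots (s+1)) p4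
          have p5 : IsPolySeq (shiftF Gs (s+1)) (fun α => ⁅u α, Dv α⁆) := by
            have := (Hnext (s+1) le_rfl).2 i (j+1) hi (by omega) (by omega) u Dv hu hDv1
            exact this
          have p6 : IsPolySeq (shiftF Gs (s+1))
              (fun α => ⁅u α, Dv α⁆ *
                (Dv α * (u α * ((Dv α)⁻¹ * ⁅Du α, Dv α⁆ * Dv α) * (u α)⁻¹) * (Dv α)⁻¹)) :=
            (IHk (s+1) (by omega)).1 _ _ p5 p4'
          have p7 : IsPolySeq (shiftF Gs (s+1)) t₂ := by
            have h' : IsPolySeq (shiftF (shiftF Gs j) (i+1))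
                (fun α => ⁅u α, Dv α⁆ *
                  (Dv α * (u α * ((Dv α)⁻¹ * ⁅Du α, Dv α⁆ * Dv α) * (u α)⁻¹) * (Dv α)⁻¹)) :=
              isPolySeq_cast (fun t => congrArg Gs (by omega)) p6
            have := (IHk j hj).2.2.1 (i+1) (by omega) v _ hv h'
            exact isPolySeq_cast (fun t => congrArg Gs (by omega)) this
          have q1 : IsPolySeq (shiftF Gs (s+1)) (fun α => t₁ α * t₂ α) :=
            (IHk (s+1) (by omega)).1 _ _ n4 p7
          refine ⟨fun α => t₁ α * t₂ α,
            isPolySeq_cast (fun t => congrArg Gs (by omega)) q1, fun α hα => ?_⟩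
          have e1 : u (α ∪ β) = u α * Du α := by rw [hDup α hα]; group
          have e2 : v (α ∪ β) = v α * Dv α := by rw [hDvp α hα]; group
          rw [ht₁, ht₂]
          simp only [e1, e2, commutatorElement_def]
          group
  have Cleft : ∀ s, 1 ≤ s → ∀ g u : Finset ℕ → G, IsPolySeq Gs g → IsPolySeq (shiftF Gs s) u →
      IsPolySeq (shiftF Gs s) (fun α => g α * u α * (g α)⁻¹) :=
    fun s hs => (CHAIN d s hs (by omega)).1
  have Pcomm : ∀ i j, 1 ≤ i → 1 ≤ j → ∀ u v : Finset ℕ → G,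
      IsPolySeq (shiftF Gs i) u → IsPolySeq (shiftF Gs j) v →
      IsPolySeq (shiftF Gs (i + j)) (fun α => ⁅u α, v α⁆) :=
    fun i j hi hj => (CHAIN d (i+j) (by omega) (by omega)).2 i j hi hj rfl
  have Binv : ∀ f : Finset ℕ → G, IsPolySeq Gs f → IsPolySeq Gs (fun α => (f α)⁻¹) := by
    intro f hf
    refine isPolySeq_mk hA d hd (fun α => inv_mem (isPolySeq_mem hf α)) (fun β hβ => ?_)
    obtain ⟨Df, hDf, hDfp⟩ := isPolySeq_deriv hA hf hβ
    have hDf1 : IsPolySeq (shiftF Gs 1) Df :=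
      isPolySeq_cast (fun i => congrArg Gs (by omega)) hDf
    have hDfi : IsPolySeq (shiftF Gs 1) (fun α => (Df α)⁻¹) :=
      (IHk 1 le_rfl).2.1 Df hDf1
    have hW : IsPolySeq (shiftF Gs 1) (fun α => f α * (Df α)⁻¹ * (f α)⁻¹) :=
      Cleft 1 le_rfl f _ hf hDfi
    refine ⟨fun α => f α * (Df α)⁻¹ * (f α)⁻¹,
      isPolySeq_cast (fun i => congrArg Gs (by omega)) hW, fun α hα => ?_⟩
    simp only [hDfp α hα]; group
  have Cright : ∀ s, 1 ≤ s → ∀ g u : Finset ℕ → G, IsPolySeq Gs g →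
      IsPolySeq (shiftF Gs s) u →
      IsPolySeq (shiftF Gs s) (fun α => (g α)⁻¹ * u α * g α) := by
    intro s hs g u hg hu
    have := Cleft s hs (fun α => (g α)⁻¹) u (Binv g hg) hu
    exact isPolySeq_congr (fun α => by group) this
  have Aprod : ∀ f g : Finset ℕ → G, IsPolySeq Gs f → IsPolySeq Gs g →
      IsPolySeq Gs (fun α => f α * g α) := by
    intro f g hf hg
    refine isPolySeq_mk hA d hd
      (fun α => mul_mem (isPolySeq_mem hf α) (isPolySeq_mem hg α)) (fun β hβ => ?_)
    obtain ⟨Df, hDf, hDfp⟩ := isPolySeq_deriv hA hf hβ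
    obtain ⟨Dg, hDg, hDgp⟩ := isPolySeq_deriv hA hg hβ
    have hDf1 : IsPolySeq (shiftF Gs 1) Df :=
      isPolySeq_cast (fun i => congrArg Gs (by omega)) hDf
    have hDg1 : IsPolySeq (shiftF Gs 1) Dg :=
      isPolySeq_cast (fun i => congrArg Gs (by omega)) hDg
    have h1 : IsPolySeq (shiftF Gs 1) (fun α => (g α)⁻¹ * Df α * g α) :=
      Cright 1 le_rfl g Df hg hDf1
    have h2 : IsPolySeq (shiftF Gs 1) (fun α => ((g α)⁻¹ * Df α * g α) * Dg α) :=
      (IHk 1 le_rfl).1 _ _ h1 hDg1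
    refine ⟨fun α => ((g α)⁻¹ * Df α * g α) * Dg α,
      isPolySeq_cast (fun i => congrArg Gs (by omega)) h2, fun α hα => ?_⟩
    simp only [hDfp α hα, hDgp α hα]; group
  exact ⟨Aprod, Binv, Cleft, Cright, Pcomm⟩

/-! ### Consequences of the group law -/

theorem isPolySeq_mul {Gs : ℕ → Subgroup G} (hA : Antitone Gs)
    (hC : ∀ i j, ⁅Gs i, Gs j⁆ ≤ Gs (i + j)) (e : ℕ) (hd : Gs e = ⊥)
    {f g : Finset ℕ → G} (hf : IsPolySeq Gs f) (hg : IsPolySeq Gs g) :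
    IsPolySeq Gs (fun α => f α * g α) :=
  (grand e Gs hA hC hd).1 f g hf hg

theorem isPolySeq_inv {Gs : ℕ → Subgroup G} (hA : Antitone Gs)
    (hC : ∀ i j, ⁅Gs i, Gs j⁆ ≤ Gs (i + j)) (e : ℕ) (hd : Gs e = ⊥)
    {f : Finset ℕ → G} (hf : IsPolySeq Gs f) :
    IsPolySeq Gs (fun α => (f α)⁻¹) :=
  (grand e Gs hA hC hd).2.1 f hf

/-! ### Basic maps -/

def basic (β : Finset ℕ) (x : G) : Finset ℕ → G := fun α => if β ⊆ α then x else 1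

theorem subset_union_iff_of_disjoint {β β' α : Finset ℕ} (hd : Disjoint β β') :
    β ⊆ α ∪ β' ↔ β ⊆ α := by
  constructor
  · intro h i hi
    rcases Finset.mem_union.1 (h hi) with h' | h'
    · exact h'
    · exact absurd h' (Finset.disjoint_left.1 hd hi)
  · intro h; exact h.trans Finset.subset_union_left

theorem isPolySeq_basic : ∀ (n : ℕ) {Gs : ℕ → Subgroup G}, Antitone Gs → ∀ (e : ℕ), Gs e = ⊥ →
    ∀ (β : Finset ℕ) (x : G), β.card ≤ n → x ∈ Gs β.card → IsPolySeq Gs (basic β x) := by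
  intro n
  induction n with
  | zero =>
    intro Gs hA e hd β x hn hx
    have hβ : β = ∅ := Finset.card_eq_zero.1 (Nat.le_zero.1 hn)
    subst hβ
    refine isPolySeq_congr (fun α => ?_) (isPolySeq_const hA e hd (by simpa using hx))
    simp [basic]
  | succ n ih =>
    intro Gs hA e hd β x hn hx
    refine isPolySeq_mk hA e hd (fun α => ?_) (fun β' hβ' => ?_)
    · by_cases h : β ⊆ α
      · simpa [basic, h] using hA (Nat.zero_le _) hx
      · simp [basic, h, one_mem]
    · by_cases hdisj : Disjoint β β'
      · refine ⟨fun _ => 1, isPolySeq_one e (le_bot_iff.1 (hd ▸ hA (by omega))), ?_⟩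
        intro α hα
        have hiff : β ⊆ α ∪ β' ↔ β ⊆ α := subset_union_iff_of_disjoint hdisj
        by_cases h : β ⊆ α <;> simp [basic, hiff, h]
      · obtain ⟨a, ha, ha'⟩ := Finset.not_disjoint_iff.1 hdisj
        have hss : β \ β' ⊂ β := by
          refine Finset.ssubset_iff_subset_ne.2 ⟨Finset.sdiff_subset, fun h => ?_⟩
          have haa : a ∈ β \ β' := by rw [h]; exact ha
          exact (Finset.mem_sdiff.1 haa).2 ha'
        have hcard : (β \ β').card < β.card := Finset.card_lt_card hss
        refine ⟨basic (β \ β') x, ih (antitone_shift hA 1) e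
          (le_bot_iff.1 (hd ▸ hA (by omega))) (β \ β') x (by omega) (hA (by omega) hx), ?_⟩
        intro α hα
        have h1 : ¬ β ⊆ α := by
          intro h
          exact (Finset.disjoint_left.1 hα (h ha)) ha'
        have h2 : β ⊆ α ∪ β' ↔ β \ β' ⊆ α := by
          constructor
          · intro h i hi
            obtain ⟨hi1, hi2⟩ := Finset.mem_sdiff.1 hi
            rcases Finset.mem_union.1 (h hi1) with h' | h'
            · exact h'
            · exact absurd h' hi2
          · intro h i hi
            by_cases h' : i ∈ β'
            · exact Finset.mem_union.2 (Or.inr h')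
            · exact Finset.mem_union.2 (Or.inl (h (Finset.mem_sdiff.2 ⟨hi, h'⟩)))
        by_cases h : β \ β' ⊆ α <;> simp [basic, h, h1, h2]

/-! ### Finitely supported coefficient products are polynomial -/

theorem enc_support_subset {n : ℕ} {β : Finset ℕ} (h : enc β ≤ n) :
    β ⊆ Finset.range (n + 1) := by
  intro i hi
  have h1 := pow_le_enc hi
  have h2 : i < 2 ^ i := (Nat.lt_two_pow_self (n := i))
  exact Finset.mem_range.2 (by omega)

theorem isPolySeq_finsupp : ∀ (n : ℕ) {Gs : ℕ → Subgroup G}, Antitone Gs →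
    (∀ i j, ⁅Gs i, Gs j⁆ ≤ Gs (i + j)) → ∀ (e : ℕ), Gs e = ⊥ → ∀ c : Finset ℕ → G,
    (∀ β, c β ≠ 1 → enc β ≤ n) → (∀ β, c β ∈ Gs β.card) →
    IsPolySeq Gs (fun α => Pprod c α) := by
  intro n
  induction n using Nat.strong_induction_on with
  | _ n ihn =>
  intro Gs hA hC e hd c hsupp hmem
  classical
  by_cases hone : ∀ β, c β = 1
  · refine isPolySeq_congr (fun α => ?_) (isPolySeq_one e hd)
    exact (Pprod_eq_one (fun β _ => hone β)).symm
  push_neg at hone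
  obtain ⟨β₀, hβ₀⟩ := hone
  set S : Finset (Finset ℕ) :=
    (Finset.range (n+1)).powerset.filter (fun β => c β ≠ 1) with hS
  have hmemS : ∀ β, c β ≠ 1 → β ∈ S := by
    intro β hβ
    exact Finset.mem_filter.2 ⟨Finset.mem_powerset.2 (enc_support_subset (hsupp β hβ)), hβ⟩
  obtain ⟨βs, hβsS, hmax⟩ := S.exists_max_image enc ⟨β₀, hmemS β₀ hβ₀⟩
  have hβsne : c βs ≠ 1 := (Finset.mem_filter.1 hβsS).2
  have hmaxall : ∀ β, c β ≠ 1 → enc β ≤ enc βs := fun β hβ => hmax β (hmemS β hβ)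
  have hpeel : ∀ α, Pprod c α =
      Pprod (fun β => if β = βs then 1 else c β) α * basic βs (c βs) α := by
    intro α
    rw [Pprod_peel (fun β _ => hmaxall β)]
    rfl
  set c' : Finset ℕ → G := fun β => if β = βs then 1 else c β with hc'
  have hbasic : IsPolySeq Gs (basic βs (c βs)) :=
    isPolySeq_basic βs.card hA e hd βs (c βs) le_rfl (hmem βs)
  have hc'poly : IsPolySeq Gs (fun α => Pprod c' α) := by
    by_cases hempty : βs = ∅
    · refine isPolySeq_congr (fun α => ?_) (isPolySeq_one e hd)
      refine (Pprod_eq_one (fun β _ => ?_)).symm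
      rw [hc']
      by_cases h : β = βs
      · simp [h]
      · simp only [h, if_false]
        by_contra hne
        have := hmaxall β hne
        rw [hempty] at this h
        have h0 : enc β = 0 := by simpa [enc] using this
        exact h (enc_eq_zero h0)
    · have hpos : 1 ≤ enc βs := by
        rcases Nat.eq_zero_or_pos (enc βs) with h | h
        · exact absurd (enc_eq_zero h) hempty
        · exact h
      have hlen : enc βs ≤ n := hsupp βs hβsne
      refine ihn (enc βs - 1) (by omega) hA hC e hd c' (fun β hβ => ?_) (fun β => ?_)
      · rw [hc'] at hβ
        by_cases h : β = βs
        · rw [h] at hβ; simp at hβ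
        · simp only [h, if_false] at hβ
          have h1 := hmaxall β hβ
          have h2 : enc β ≠ enc βs := fun h' => h (enc_injective h')
          omega
      · rw [hc']
        by_cases h : β = βs
        · simp [h, one_mem]
        · simpa [h] using hmem β
  refine isPolySeq_congr (fun α => (hpeel α).symm) ?_
  exact isPolySeq_mul hA hC e hd hc'poly hbasic

/-! ### The vanishing lemma and Taylor membership -/

theorem vanish : ∀ (n : ℕ) (β : Finset ℕ), β.card ≤ n → ∀ {Gs : ℕ → Subgroup G},
    Antitone Gs → ∀ r : Finset ℕ → G, IsPolySeq Gs r → (∀ α, α ⊂ β → r α = 1) →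
    r β ∈ Gs β.card := by
  intro n
  induction n with
  | zero =>
    intro β hβ Gs hA r hr hvan
    have : β = ∅ := Finset.card_eq_zero.1 (Nat.le_zero.1 hβ)
    subst this
    simpa using isPolySeq_mem hr ∅
  | succ n ih =>
    intro β hβ Gs hA r hr hvan
    rcases Finset.eq_empty_or_nonempty β with rfl | hne
    · simpa using isPolySeq_mem hr ∅
    obtain ⟨m₀, hm₀⟩ := hne
    set β₀ := β.erase m₀ with hβ₀
    have hm₀β₀ : m₀ ∉ β₀ := Finset.notMem_erase _ _
    have hβ₀β : β₀ ⊂ β := Finset.erase_ssubset hm₀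
    have hcard : β₀.card + 1 = β.card := Finset.card_erase_add_one hm₀
    obtain ⟨Dr, hDr, hDrp⟩ := isPolySeq_deriv hA hr (Finset.singleton_nonempty m₀)
    have hvan' : ∀ α, α ⊂ β₀ → Dr α = 1 := by
      intro α hα
      have hdisj : Disjoint α {m₀} := Finset.disjoint_singleton_right.2
        (fun h => hm₀β₀ (hα.subset h))
      rw [hDrp α hdisj]
      have h1 : r α = 1 := hvan α (hα.trans hβ₀β)
      have h2 : r (α ∪ {m₀}) = 1 := by
        refine hvan _ (Finset.ssubset_iff_subset_ne.2 ⟨?_, ?_⟩)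
        · refine Finset.union_subset (hα.subset.trans (Finset.erase_subset _ _)) ?_
          simpa using hm₀
        · intro h
          have hcards : (α ∪ {m₀}).card < β.card := by
            have e1 : (α ∪ {m₀}).card = α.card + 1 := by
              rw [Finset.union_comm, ← Finset.insert_eq]
              exact Finset.card_insert_of_notMem (Finset.disjoint_singleton_right.1 hdisj)
            have e2 : α.card < β₀.card := Finset.card_lt_card hα
            omega
          rw [h] at hcards
          omega
      rw [h1, h2]; simp
    have hDrβ₀ : Dr β₀ ∈ (fun i => Gs (i + 1)) β₀.card := by
      refine ih β₀ (by omega) (antitone_shift hA 1) Dr hDr hvan'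
    have hdisj : Disjoint β₀ {m₀} := Finset.disjoint_singleton_right.2 hm₀β₀
    have he : Dr β₀ = r β := by
      rw [hDrp β₀ hdisj, hvan β₀ hβ₀β]
      have : β₀ ∪ {m₀} = β := by
        rw [Finset.union_comm, ← Finset.insert_eq]
        exact Finset.insert_erase hm₀
      rw [this]; simp
    rw [← he]
    have : β₀.card + 1 = β.card := hcard
    simpa [this] using hDrβ₀

theorem taylor_mem : ∀ (n : ℕ) (β : Finset ℕ), β.card ≤ n → ∀ {Gs : ℕ → Subgroup G},
    Antitone Gs → (∀ i j, ⁅Gs i, Gs j⁆ ≤ Gs (i + j)) → ∀ (e : ℕ), Gs e = ⊥ →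
    ∀ g : Finset ℕ → G, IsPolySeq Gs g → taylor g β ∈ Gs β.card := by
  intro n
  induction n with
  | zero =>
    intro β hβ Gs hA hC e hd g hg
    have : β = ∅ := Finset.card_eq_zero.1 (Nat.le_zero.1 hβ)
    subst this
    rw [taylor_eq]
    simpa using isPolySeq_mem hg ∅
  | succ n ih =>
    intro β hβ Gs hA hC e hd g hg
    classical
    set ct : Finset ℕ → G := fun β' => if β' ⊂ β then taylor g β' else 1 with hct
    have hq : IsPolySeq Gs (fun α => Pprod ct α) := by
      refine isPolySeq_finsupp (enc β) hA hC e hd ct (fun β' hβ' => ?_) (fun β' => ?_)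
      · rw [hct] at hβ'
        by_cases h : β' ⊂ β
        · exact enc_mono h.subset
        · simp [h] at hβ'
      · rw [hct]
        by_cases h : β' ⊂ β
        · simp only [h, if_true]
          exact ih β' (by
            have := Finset.card_lt_card h
            omega) hA hC e hd g hg
        · simp [h, one_mem]
    set r : Finset ℕ → G := fun α => (Pprod ct α)⁻¹ * g α with hrdef
    have hrpoly : IsPolySeq Gs r :=
      isPolySeq_mul hA hC e hd (isPolySeq_inv hA hC e hd hq) hg
    have hvan : ∀ α, α ⊂ β → r α = 1 := by
      intro α hα
      have h1 : Pprod ct α = Pprod (taylor g) α := by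
        refine Pprod_congr (fun δ hδ => ?_)
        have : δ ⊂ β := lt_of_le_of_lt hδ hα
        simp [hct, this]
      rw [hrdef]
      simp only []
      rw [h1, Pprod_taylor]
      simp
    have hr := vanish β.card β le_rfl hA r hrpoly hvan
    have hfinal : taylor g β = r β := by
      rw [taylor_eq, hrdef]
      simp only []
      congr 2
      refine Pprod_congr (fun β' hβ' => ?_)
      have hns : ¬ (β ⊂ β) := fun hh => (Finset.ssubset_iff_subset_ne.1 hh).2 rfl
      by_cases h : β' = β
      · simp [h, hct, hns]
      · have : β' ⊂ β := lt_of_le_of_ne hβ' h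
        simp [h, hct, this]
    rw [hfinal]
    exact hr

/-! ### Arbitrary coefficient products are polynomial -/

theorem isPolySeq_pprod : ∀ (d : ℕ) {Gs : ℕ → Subgroup G}, Antitone Gs →
    (∀ i j, ⁅Gs i, Gs j⁆ ≤ Gs (i + j)) → Gs d = ⊥ → ∀ c : Finset ℕ → G,
    (∀ β, c β ∈ Gs β.card) → IsPolySeq Gs (fun α => Pprod c α) := by
  intro d
  induction d with
  | zero =>
    intro Gs hA hC hd c hc
    refine isPolySeq_congr (fun α => ?_) (isPolySeq_one 0 hd)
    refine (Pprod_eq_one (fun β _ => ?_)).symm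
    have := hA (Nat.zero_le β.card) (hc β)
    rw [hd] at this
    simpa [Subgroup.mem_bot] using this
  | succ d ih =>
    intro Gs hA hC hd c hc
    refine isPolySeq_mk hA (d+1) hd (fun α => Pprod_mem (fun β _ => hA (Nat.zero_le _) (hc β)))
      (fun β' hβ' => ?_)
    classical
    set D : Finset ℕ → G := fun α => (Pprod c α)⁻¹ * Pprod c (α ∪ β') with hD
    set c' : Finset ℕ → G := fun β => if Disjoint β β' then taylor D β else 1 with hc'
    have hshiftA : Antitone (fun i => Gs (i + 1)) := antitone_shift hA 1
    have hshiftC : ∀ i j, ⁅(fun i => Gs (i+1)) i, (fun i => Gs (i+1)) j⁆ ≤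
        (fun i => Gs (i+1)) (i + j) := by
      intro i j
      refine le_trans (hC (i+1) (j+1)) (hA (by omega))
    have hshiftd : (fun i => Gs (i + 1)) d = ⊥ := hd
    have hmem' : ∀ β, c' β ∈ Gs (β.card + 1) := by
      intro β
      rw [hc']
      by_cases hdisj : Disjoint β β'
      swap
      · simp [hdisj, one_mem]
      simp only [hdisj, if_true]
      set ch : Finset ℕ → G := fun γ => if γ ⊆ β ∪ β' then c γ else 1 with hch
      have hfhat : IsPolySeq Gs (fun α => Pprod ch α) := by
        refine isPolySeq_finsupp (enc (β ∪ β')) hA hC (d+1) hd ch (fun γ hγ => ?_) (fun γ => ?_)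
        · rw [hch] at hγ
          by_cases h : γ ⊆ β ∪ β'
          · exact enc_mono h
          · simp [h] at hγ
        · rw [hch]
          by_cases h : γ ⊆ β ∪ β'
          · simpa [h] using hc γ
          · simp [h, one_mem]
      obtain ⟨Dh, hDh, hDhp⟩ := isPolySeq_deriv hA hfhat hβ'
      have e1 : taylor D β = taylor (fun α => (Pprod ch α)⁻¹ * Pprod ch (α ∪ β')) β := by
        refine taylor_congr (fun γ hγ => ?_)
        have p1 : Pprod c γ = Pprod ch γ := by
          refine Pprod_congr (fun δ hδ => ?_)
          have : δ ⊆ β ∪ β' := (hδ.trans hγ).trans Finset.subset_union_left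
          simp [hch, this]
        have p2 : Pprod c (γ ∪ β') = Pprod ch (γ ∪ β') := by
          refine Pprod_congr (fun δ hδ => ?_)
          have : δ ⊆ β ∪ β' := hδ.trans (Finset.union_subset_union_left hγ)
          simp [hch, this]
        rw [hD]
        simp only []
        rw [p1, p2]
      have e2 : taylor (fun α => (Pprod ch α)⁻¹ * Pprod ch (α ∪ β')) β = taylor Dh β := by
        refine taylor_congr (fun γ hγ => ?_)
        have hγdisj : Disjoint γ β' := Finset.disjoint_of_subset_left hγ hdisj
        rw [hDhp γ hγdisj]
      rw [e1, e2]
      exact taylor_mem β.card β le_rfl hshiftA hshiftC d hshiftd Dh ⟨hDh.choose, hDh.choose_spec⟩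
    have hW : IsPolySeq (fun i => Gs (i + 1)) (fun α => Pprod c' α) :=
      ih hshiftA hshiftC hshiftd c' hmem'
    refine ⟨fun α => Pprod c' α, hW, fun α hα => ?_⟩
    have h1 : Pprod c' α = Pprod (taylor D) α := by
      refine Pprod_congr (fun β hβ => ?_)
      have : Disjoint β β' := Finset.disjoint_of_subset_left hβ hα
      simp [hc', this]
    show Pprod c' α = (Pprod c α)⁻¹ * Pprod c (α ∪ β')
    rw [h1, Pprod_taylor]

/-! ### Topological lemmas -/

section Topology

variable [TopologicalSpace G] [IsTopologicalGroup G]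

theorem continuous_pprod_aux : ∀ (n : ℕ) (α : Finset ℕ), α.card ≤ n →
    Continuous (fun c : Finset ℕ → G => Pprod c α) := by
  intro n
  induction n with
  | zero =>
    intro α hα
    have : α = ∅ := Finset.card_eq_zero.1 (Nat.le_zero.1 hα)
    subst this
    simp only [Pprod_empty]
    exact continuous_apply _
  | succ n ih =>
    intro α hα
    rcases Finset.eq_empty_or_nonempty α with rfl | hne
    · simp only [Pprod_empty]; exact continuous_apply _
    obtain ⟨M, α', rfl, hlt, hM, hcard⟩ :
        ∃ M α', α = insert M α' ∧ (∀ i ∈ α', i < M) ∧ M ∉ α' ∧ α'.card + 1 = α.card := by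
      refine ⟨α.max' hne, α.erase (α.max' hne), (Finset.insert_erase (α.max'_mem hne)).symm,
        fun i hi => lt_of_le_of_ne (α.le_max' i (Finset.mem_of_mem_erase hi))
          (Finset.ne_of_mem_erase hi), Finset.notMem_erase _ _, ?_⟩
      exact Finset.card_erase_add_one (α.max'_mem hne)
    have h1 : (fun c : Finset ℕ → G => Pprod c (insert M α')) =
        fun c => Pprod c α' * Pprod (fun β => c (insert M β)) α' :=
      funext fun c => Pprod_insert c hlt
    rw [h1]
    exact (ih α' (by omega)).mul ((ih α' (by omega)).comp
      (continuous_pi (fun β => continuous_apply (insert M β))))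

theorem continuous_pprod (α : Finset ℕ) :
    Continuous (fun c : Finset ℕ → G => Pprod c α) :=
  continuous_pprod_aux α.card α le_rfl

end Topology

theorem exists_compact_cover (H : Type*) [Group H] [TopologicalSpace H] [IsTopologicalGroup H]
    [LocallyCompactSpace H] (Λ : Subgroup H) [CompactSpace (H ⧸ Λ)] :
    ∃ K : Set H, IsCompact K ∧ ∀ x : H, ∃ k ∈ K, k⁻¹ * x ∈ Λ := by
  obtain ⟨U, hUc, hU1⟩ := exists_compact_mem_nhds (1 : H)
  have hV1 : (1 : H) ∈ interior U := mem_interior_iff_mem_nhds.2 hU1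
  have hcover : (Set.univ : Set (H ⧸ Λ)) ⊆
      ⋃ x : H, (QuotientGroup.mk : H → H ⧸ Λ) '' ((· * x) '' interior U) := by
    intro q _
    obtain ⟨y, rfl⟩ := QuotientGroup.mk_surjective q
    exact Set.mem_iUnion.2 ⟨y, ⟨1 * y, ⟨1, hV1, rfl⟩, by simp⟩⟩
  have hopen : ∀ x : H, IsOpen ((QuotientGroup.mk : H → H ⧸ Λ) '' ((· * x) '' interior U)) :=
    fun x => QuotientGroup.isOpenMap_coe _ ((isOpenMap_mul_right x) _ isOpen_interior)
  obtain ⟨t, ht⟩ := isCompact_univ.elim_finite_subcover _ hopen hcover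
  refine ⟨⋃ x ∈ t, (· * x) '' U,
    t.isCompact_biUnion (fun x _ => hUc.image (continuous_mul_right x)), ?_⟩
  intro x
  have hx : (QuotientGroup.mk x : H ⧸ Λ) ∈
      ⋃ x₀ ∈ t, (QuotientGroup.mk : H → H ⧸ Λ) '' ((· * x₀) '' interior U) := ht (Set.mem_univ _)
  rw [Set.mem_iUnion₂] at hx
  obtain ⟨x₀, hx₀t, hsx⟩ := hx
  obtain ⟨y, hy, hyx⟩ := hsx
  obtain ⟨v, hv, rfl⟩ := hy
  refine ⟨v * x₀, Set.mem_biUnion hx₀t ⟨v, interior_subset hv, rfl⟩, ?_⟩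
  exact QuotientGroup.eq.1 hyx

/-! ### Reduction of coefficients into fundamental domains -/

attribute [local instance] Classical.propDecidable

noncomputable def redAux (g : Finset ℕ → G) (KK : ℕ → Set G) (Γ : Subgroup G) :
    ℕ → Finset ℕ → G
  | 0, _ => 1
  | n+1, β =>
    if β.card = n then
      if h : ∃ k, k ∈ KK β.card ∧
          k⁻¹ * ((Pprod (fun β'' => if β'' = β then 1 else redAux g KK Γ n β'') β)⁻¹ * g β) ∈ Γ
      then h.choose else 1
    else redAux g KK Γ n β

noncomputable def red (g : Finset ℕ → G) (KK : ℕ → Set G) (Γ : Subgroup G)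
    (β : Finset ℕ) : G := redAux g KK Γ (β.card + 1) β

theorem redAux_stable (g : Finset ℕ → G) (KK : ℕ → Set G) (Γ : Subgroup G) :
    ∀ n β, β.card < n → redAux g KK Γ n β = red g KK Γ β := by
  intro n
  induction n with
  | zero => intro β h; omega
  | succ n ih =>
    intro β h
    by_cases hc : β.card = n
    · subst hc; rfl
    · have h1 : redAux g KK Γ (n+1) β = redAux g KK Γ n β := by
        simp [redAux, hc]
      rw [h1, ih β (by omega)]

theorem red_eq (g : Finset ℕ → G) (KK : ℕ → Set G) (Γ : Subgroup G) (β : Finset ℕ) :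
    red g KK Γ β = if h : ∃ k, k ∈ KK β.card ∧
        k⁻¹ * ((Pprod (fun β'' => if β'' = β then 1 else red g KK Γ β'') β)⁻¹ * g β) ∈ Γ
      then h.choose else 1 := by
  have hP : Pprod (fun β'' => if β'' = β then 1 else redAux g KK Γ β.card β'') β =
      Pprod (fun β'' => if β'' = β then 1 else red g KK Γ β'') β := by
    refine Pprod_congr (fun β' hβ' => ?_)
    by_cases h : β' = β
    · simp [h]
    · have hlt : β'.card < β.card := Finset.card_lt_card (lt_of_le_of_ne hβ' h)
      simp only [h, if_false]
      exact redAux_stable g KK Γ β.card β' hlt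
  have h0 : red g KK Γ β = if h : ∃ k, k ∈ KK β.card ∧
      k⁻¹ * ((Pprod (fun β'' => if β'' = β then 1 else redAux g KK Γ β.card β'') β)⁻¹ * g β) ∈ Γ
    then h.choose else 1 := by
    show redAux g KK Γ (β.card + 1) β = _
    simp [redAux]
  rw [h0]
  simp only [hP]
end PolyProof

section LC
open Topology

theorem discrete_subgroupOf {G : Type*} [Group G] [TopologicalSpace G] (Γ K : Subgroup G)
    [DiscreteTopology ↥Γ] : DiscreteTopology ↥(Γ.subgroupOf K) := by
  set j : ↥(Γ.subgroupOf K) → ↥Γ := fun x => ⟨((x : ↥K) : G), x.2⟩ with hj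
  have hcomp : IsEmbedding ((Subtype.val : ↥Γ → G) ∘ j) := by
    have h2 : ((Subtype.val : ↥Γ → G) ∘ j) =
        ((Subtype.val : ↥K → G) ∘ (Subtype.val : ↥(Γ.subgroupOf K) → ↥K)) := rfl
    rw [h2]
    exact IsEmbedding.subtypeVal.comp IsEmbedding.subtypeVal
  have hjemb : IsEmbedding j := (IsEmbedding.of_comp_iff (f := j) IsEmbedding.subtypeVal).1 hcomp
  exact hjemb.discreteTopology


theorem locallyCompact_of_discrete_cocompact (H : Type*) [Group H] [TopologicalSpace H]
    [IsTopologicalGroup H] (Λ : Subgroup H) [DiscreteTopology ↥Λ] [CompactSpace (H ⧸ Λ)] :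
    LocallyCompactSpace H := by
  haveI : DiscreteTopology ↥(Λ : Set H) := ‹DiscreteTopology ↥Λ›
  obtain ⟨W, hWnhds, hWΛ⟩ :=
    nhds_inter_eq_singleton_of_mem_discrete (s := (Λ : Set H)) DiscreteTopology.isDiscrete Λ.one_mem
  obtain ⟨V₂, hV₂open, hV₂mem, hV₂⟩ := exists_open_nhds_one_mul_subset hWnhds
  set V : Set H := V₂ ∩ V₂⁻¹ with hVdef
  have hVopen : IsOpen V := hV₂open.inter hV₂open.inv
  have hV1 : (1 : H) ∈ V := ⟨hV₂mem, by simpa using hV₂mem⟩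
  have hVinj : ∀ x ∈ V, ∀ y ∈ V, (QuotientGroup.mk x : H ⧸ Λ) = QuotientGroup.mk y → x = y := by
    intro x hx y hy hxy
    have h1 : x⁻¹ * y ∈ Λ := QuotientGroup.eq.1 hxy
    have h2 : x⁻¹ * y ∈ W := by
      refine hV₂ ?_
      exact Set.mul_mem_mul (Set.mem_inv.1 hx.2) hy.1
    have h3 : x⁻¹ * y ∈ W ∩ (Λ : Set H) := ⟨h2, h1⟩
    rw [hWΛ] at h3
    have : x⁻¹ * y = 1 := h3
    calc x = x * (x⁻¹ * y) := by rw [this, mul_one]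
    _ = y := by group
  obtain ⟨V₃, hV₃open, hV₃mem, hV₃⟩ := exists_open_nhds_one_mul_subset (hVopen.mem_nhds hV1)
  set V₁ : Set H := V₃ ∩ V₃⁻¹ with hV₁def
  have hV₁open : IsOpen V₁ := hV₃open.inter hV₃open.inv
  have hV₁mem : (1 : H) ∈ V₁ := ⟨hV₃mem, by simpa using hV₃mem⟩
  have hV₁V : ∀ x ∈ V₁, ∀ y ∈ V₁, x⁻¹ * y ∈ V := by
    intro x hx y hy
    exact hV₃ (Set.mul_mem_mul (Set.mem_inv.1 hx.2) hy.1)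
  have hclosureD : closure ((QuotientGroup.mk : H → H ⧸ Λ) '' V₁) ⊆
      (QuotientGroup.mk : H → H ⧸ Λ) '' V := by
    intro q hq
    obtain ⟨y, rfl⟩ := QuotientGroup.mk_surjective q
    have hnb : ((QuotientGroup.mk : H → H ⧸ Λ) '' ((· * y) '' V₁)) ∈ 𝓝 (QuotientGroup.mk y) := by
      refine IsOpen.mem_nhds (QuotientGroup.isOpenMap_coe _ ((isOpenMap_mul_right y) _ hV₁open))
        ⟨1 * y, ⟨1, hV₁mem, rfl⟩, by simp⟩
    obtain ⟨q', hq'1, hq'2⟩ := mem_closure_iff_nhds.1 hq _ hnb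
    obtain ⟨w, ⟨v₁, hv₁, rfl⟩, hweq⟩ := hq'1
    obtain ⟨v₂, hv₂, hv₂eq⟩ := hq'2
    have heq : (QuotientGroup.mk (v₁ * y) : H ⧸ Λ) = QuotientGroup.mk v₂ := by
      rw [hweq, hv₂eq]
    have h1 : (v₁ * y)⁻¹ * v₂ ∈ Λ := QuotientGroup.eq.1 heq
    have h2 : y⁻¹ * (v₁⁻¹ * v₂) ∈ Λ := by
      have : y⁻¹ * (v₁⁻¹ * v₂) = (v₁ * y)⁻¹ * v₂ := by group
      rw [this]; exact h1
    refine ⟨v₁⁻¹ * v₂, hV₁V v₁ hv₁ v₂ hv₂, ?_⟩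
    exact (QuotientGroup.eq.2 h2).symm
  set D := closure ((QuotientGroup.mk : H → H ⧸ Λ) '' V₁) with hD
  have hDcomp : IsCompact D := isClosed_closure.isCompact
  set e : ↥V → H ⧸ Λ := fun x => QuotientGroup.mk ↑x with he
  have hemb : IsOpenEmbedding e := by
    refine IsOpenEmbedding.of_continuous_injective_isOpenMap
      (QuotientGroup.continuous_mk.comp continuous_subtype_val) ?_ ?_
    · rintro ⟨x, hx⟩ ⟨y, hy⟩ h
      exact Subtype.ext (hVinj x hx y hy h)
    · intro U hU
      obtain ⟨O, hO, rfl⟩ := isOpen_induced_iff.1 hU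
      have himg : e '' (Subtype.val ⁻¹' O) = (QuotientGroup.mk : H → H ⧸ Λ) '' (O ∩ V) := by
        ext q
        constructor
        · rintro ⟨⟨x, hxV⟩, hxO, rfl⟩
          exact ⟨x, ⟨hxO, hxV⟩, rfl⟩
        · rintro ⟨x, ⟨hxO, hxV⟩, rfl⟩
          exact ⟨⟨x, hxV⟩, hxO, rfl⟩
      rw [himg]
      exact QuotientGroup.isOpenMap_coe _ (hO.inter hVopen)
  have hrange : Set.range e = (QuotientGroup.mk : H → H ⧸ Λ) '' V := by
    rw [he]
    rw [show (fun x : ↥V => (QuotientGroup.mk ↑x : H ⧸ Λ)) =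
      (QuotientGroup.mk : H → H ⧸ Λ) ∘ Subtype.val from rfl]
    rw [Set.range_comp, Subtype.range_coe]
  have hDrange : D ⊆ Set.range e := by rw [hrange]; exact hclosureD
  have hKc : IsCompact (e ⁻¹' D) := hemb.isEmbedding.toIsInducing.isCompact_preimage' hDcomp hDrange
  have hKcomp : IsCompact (Subtype.val '' (e ⁻¹' D)) := hKc.image continuous_subtype_val
  have hKnhds : Subtype.val '' (e ⁻¹' D) ∈ 𝓝 (1 : H) := by
    have hsub : V₁ ∩ V ⊆ Subtype.val '' (e ⁻¹' D) := by
      intro x hx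
      exact ⟨⟨x, hx.2⟩, subset_closure ⟨x, hx.1, rfl⟩, rfl⟩
    exact Filter.mem_of_superset ((hV₁open.inter hVopen).mem_nhds ⟨hV₁mem, hV1⟩) hsub
  exact hKcomp.locallyCompactSpace_of_mem_nhds_of_group hKnhds

end LC

variable {E : Type*} [NormedAddCommGroup E] [NormedSpace ℝ E] [FiniteDimensional ℝ E]
  {G : Type*} [TopologicalSpace G] [ChartedSpace E G] [Group G] [IsTopologicalGroup G]
  [LieGroup (modelWithCornersSelf ℝ E) (⊤ : ℕ∞) G] [Group.IsNilpotent G]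

open PolyProof in
/-- Let `G_•/Γ` be a nilmanifold of length `d`. Then the set
`poly(𝓕∅ → G_•/Γ)`, viewed as a subset of `(G/Γ)^{𝓕∅}` with the product (pointwise
convergence) topology, is compact. -/
theorem statement3
    (d : ℕ) (Gs : ℕ → Subgroup G)
    (hanti : Antitone Gs) (hclosed : ∀ i, IsClosed (Gs i : Set G))
    (hcomm : ∀ i j, ⁅Gs i, Gs j⁆ ≤ Gs (i + j))
    (hfil0 : Gs 0 = ⊤) (hfil1 : Gs 1 = ⊤) (hlen : Gs (d + 1) = ⊥)
    (Γ : Subgroup G) [DiscreteTopology Γ] (hcocompact : CompactSpace (G ⧸ Γ))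
    (hrat : ∀ i, CompactSpace (↥(Gs i) ⧸ Γ.subgroupOf (Gs i)))
    : IsCompact {f : Finset ℕ → G ⧸ Γ | IsPolyQuot Gs Γ f} := by
  classical
  have hKK : ∀ i : ℕ, ∃ K : Set G, IsCompact K ∧ (∀ k ∈ K, k ∈ Gs i) ∧
      ∀ x, x ∈ Gs i → ∃ k ∈ K, k⁻¹ * x ∈ Γ := by
    intro i
    haveI : DiscreteTopology ↥(Γ.subgroupOf (Gs i)) := discrete_subgroupOf Γ (Gs i)
    haveI := hrat i
    haveI : LocallyCompactSpace ↥(Gs i) :=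
      locallyCompact_of_discrete_cocompact _ (Γ.subgroupOf (Gs i))
    obtain ⟨K₀, hK₀c, hK₀cov⟩ := exists_compact_cover (↥(Gs i)) (Γ.subgroupOf (Gs i))
    refine ⟨Subtype.val '' K₀, hK₀c.image continuous_subtype_val, ?_, ?_⟩
    · rintro k ⟨k₀, _, rfl⟩; exact k₀.2
    · intro x hx
      obtain ⟨k₀, hk₀K, hmem⟩ := hK₀cov ⟨x, hx⟩
      exact ⟨k₀, ⟨k₀, hk₀K, rfl⟩, by simpa using (Subgroup.mem_subgroupOf.1 hmem)⟩
  choose KK hKKc hKKsub hKKcov using hKK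
  have hset : {f : Finset ℕ → G ⧸ Γ | IsPolyQuot Gs Γ f} =
      (fun c (α : Finset ℕ) => (QuotientGroup.mk (Pprod c α) : G ⧸ Γ)) ''
        (Set.pi Set.univ (fun β : Finset ℕ => KK β.card)) := by
    apply Set.Subset.antisymm
    · rintro f ⟨g, hg, hfg⟩
      have hinv : ∀ n : ℕ, ∀ β : Finset ℕ, β.card ≤ n →
          red g KK Γ β ∈ KK β.card ∧ ∃ γ ∈ Γ, Pprod (red g KK Γ) β = g β * γ := by
        intro n
        induction n using Nat.strong_induction_on with
        | _ n ihn =>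
        intro β hβc
        have pf : ∀ β'', β'' ⊂ β → red g KK Γ β'' ∈ KK β''.card ∧
            ∃ γ ∈ Γ, Pprod (red g KK Γ) β'' = g β'' * γ := fun β'' h'' => by
          have hlt := Finset.card_lt_card h''
          exact ihn β''.card (by omega) β'' le_rfl
        set cbar : Finset ℕ → G := fun β'' => if β'' ⊂ β then red g KK Γ β'' else 1 with hcbar
        have hcbarmem : ∀ β'', cbar β'' ∈ Gs β''.card := by
          intro β''
          by_cases h : β'' ⊂ β
          · simpa [hcbar, h] using hKKsub β''.card _ (pf β'' h).1
          · simp [hcbar, h, one_mem]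
        have hcbarsupp : ∀ β'', cbar β'' ≠ 1 → enc β'' ≤ enc β := by
          intro β'' h
          by_cases h' : β'' ⊂ β
          · exact enc_mono h'.subset
          · simp [hcbar, h'] at h
        have hqq : IsPolySeq Gs (fun α => Pprod cbar α) :=
          isPolySeq_finsupp (enc β) hanti hcomm (d+1) hlen cbar hcbarsupp hcbarmem
        set r : Finset ℕ → G := fun α => (Pprod cbar α)⁻¹ * g α with hrdef
        have hrpoly : IsPolySeq Gs r :=
          isPolySeq_mul hanti hcomm (d+1) hlen (isPolySeq_inv hanti hcomm (d+1) hlen hqq) hg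
        have hrΓ : ∀ β'', β'' ⊂ β → r β'' ∈ Γ := by
          intro β'' h''
          obtain ⟨hK, γ, hγΓ, hγeq⟩ := pf β'' h''
          have hpeq : Pprod cbar β'' = Pprod (red g KK Γ) β'' :=
            Pprod_congr (fun δ hδ => by
              have : δ ⊂ β := lt_of_le_of_lt hδ h''
              simp [hcbar, this])
          have heq : r β'' = γ⁻¹ := by
            rw [hrdef]; simp only []
            rw [hpeq, hγeq]; group
          rw [heq]; exact inv_mem hγΓ
        have tayΓ : ∀ m : ℕ, ∀ β'', β'' ⊂ β → β''.card ≤ m → taylor r β'' ∈ Γ := by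
          intro m
          induction m with
          | zero =>
            intro β'' h'' hc
            have : β'' = ∅ := Finset.card_eq_zero.1 (Nat.le_zero.1 hc)
            subst this
            rw [taylor_eq]
            simpa using hrΓ ∅ h''
          | succ m ihm =>
            intro β'' h'' hc
            rw [taylor_eq]
            refine mul_mem (inv_mem (Pprod_mem (fun δ hδ => ?_))) (hrΓ β'' h'')
            by_cases h : δ = β''
            · simp [h, one_mem]
            · have h1 : δ ⊂ β'' := lt_of_le_of_ne hδ h
              have := Finset.card_lt_card h1
              simp only [h, if_false]
              exact ihm δ (lt_trans h1 h'') (by omega)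
        have hq : Pprod cbar β = Pprod (fun β'' => if β'' = β then 1 else red g KK Γ β'') β :=
          Pprod_congr (fun β'' hβ'' => by
            by_cases h : β'' = β
            · have hns : ¬ (β ⊂ β) := fun hh => (Finset.ssubset_iff_subset_ne.1 hh).2 rfl
              simp [hcbar, h, hns]
            · have h1 : β'' ⊂ β := lt_of_le_of_ne hβ'' h
              simp [hcbar, h, h1])
        have hγ₀Γ : Pprod (fun β'' => if β'' = β then 1 else taylor r β'') β ∈ Γ := by
          refine Pprod_mem (fun δ hδ => ?_)
          by_cases h : δ = β
          · simp [h, one_mem]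
          · have h1 : δ ⊂ β := lt_of_le_of_ne hδ h
            simp only [h, if_false]
            exact tayΓ δ.card δ h1 le_rfl
        have ht : taylor r β ∈ Gs β.card :=
          taylor_mem β.card β le_rfl hanti hcomm (d+1) hlen r hrpoly
        have hδsplit : r β =
            Pprod (fun β'' => if β'' = β then 1 else taylor r β'') β * taylor r β := by
          conv_lhs => rw [← Pprod_taylor r β]
          exact Pprod_last (taylor r)
        have hγ₀G : Pprod (fun β'' => if β'' = β then 1 else taylor r β'') β ∈ Gs 0 := by
          rw [hfil0]; exact Subgroup.mem_top _
        set γ₀ := Pprod (fun β'' => if β'' = β then 1 else taylor r β'') β with hγ₀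
        have hs : γ₀ * taylor r β * γ₀⁻¹ ∈ Gs β.card := conj_mem_left hanti hcomm ht hγ₀G
        obtain ⟨k, hkK, hkΓ⟩ := hKKcov β.card _ hs
        have hrb : (Pprod (fun β'' => if β'' = β then 1 else red g KK Γ β'') β)⁻¹ * g β
            = r β := by
          rw [hrdef]; simp only []; rw [hq]
        have hex : ∃ k', k' ∈ KK β.card ∧
            k'⁻¹ * ((Pprod (fun β'' => if β'' = β then 1 else red g KK Γ β'') β)⁻¹ * g β)
              ∈ Γ := by
          refine ⟨k, hkK, ?_⟩
          rw [hrb, hδsplit]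
          have hre : k⁻¹ * (γ₀ * taylor r β) = (k⁻¹ * (γ₀ * taylor r β * γ₀⁻¹)) * γ₀ := by
            group
          rw [hre]
          exact mul_mem hkΓ hγ₀Γ
        have hredeq : red g KK Γ β = hex.choose := by
          rw [red_eq g KK Γ β, dif_pos hex]
        obtain ⟨hcK, hcΓ⟩ := hex.choose_spec
        constructor
        · rw [hredeq]; exact hcK
        · refine ⟨(r β)⁻¹ * red g KK Γ β, ?_, ?_⟩
          · have h2 : (red g KK Γ β)⁻¹ * r β ∈ Γ := by
              rw [hredeq, ← hrb]; exact hcΓ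
            have h3 : (r β)⁻¹ * red g KK Γ β = ((red g KK Γ β)⁻¹ * r β)⁻¹ := by group
            rw [h3]; exact inv_mem h2
          · rw [Pprod_last (red g KK Γ), ← hq]
            have hX : Pprod cbar β = g β * (r β)⁻¹ := by
              have : r β = (Pprod cbar β)⁻¹ * g β := by rw [hrdef]
              rw [this]; group
            rw [hX]; group
      refine ⟨red g KK Γ, Set.mem_univ_pi.2 (fun β => (hinv β.card β le_rfl).1), ?_⟩
      funext α
      show QuotientGroup.mk (Pprod (red g KK Γ) α) = f α
      obtain ⟨γ, hγΓ, hγeq⟩ := (hinv α.card α le_rfl).2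
      rw [hγeq, hfg α]
      exact QuotientGroup.mk_mul_of_mem (g α) hγΓ
    · rintro f ⟨c, hcC, rfl⟩
      refine ⟨fun α => Pprod c α, ?_, fun α => rfl⟩
      refine isPolySeq_pprod (d+1) hanti hcomm hlen c (fun β => ?_)
      exact hKKsub β.card _ (hcC β (Set.mem_univ β))
  rw [hset]
  refine ((isCompact_univ_pi (fun β : Finset ℕ => hKKc β.card)).image ?_)
  exact continuous_pi (fun α => QuotientGroup.continuous_mk.comp (continuous_pprod α))
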